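/- arXiv:0910.0322 — 5 statements merged into one kernel-verified Lean document; each statement's English description precedes it below -/
import Mathlib

section
/- Under the higher-dimensional setup (u ≥ v smooth on the closure of Ω = (0,1) × {|y|<1}, u > 0, v > 0, ∂_t u > 0 in Ω, u(0,y) = 0, main Laplacian comparison condition), let t(s,y) be a C² function on an open subset U of {(s,y) : 0 < s < 1, |y| < 1} satisfying 0 < t(s,y) ≤ s and u(t(s,y), y) = v(s,y) on U, and set τ(s,y) = s − t(s,y). Then at every point of U, with the derivatives of u evaluated at (t(s,y), y) and the derivatives of τ taken in the variables (s,y): Δτ − (u_tt/u_t)(|∇τ|² − 2 ∂_s τ) + 2 Σ_{i=1}^n (u_{t y_i}/u_t) ∂_{y_i} τ ≤ 0, where ∇τ = (∂_s τ, ∂_{y_1} τ, …, ∂_{y_n} τ) and Δτ = ∂_ss τ + Σ_i ∂_{y_i y_i} τ. -/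
set_option maxRecDepth 8000
set_option maxHeartbeats 1000000

open Filter


open Set

/-- `i`-th partial derivative in the `t` variable. -/
noncomputable def partialT (n : ℕ) (f : ℝ → EuclideanSpace ℝ (Fin n) → ℝ) (i : ℕ)
    (t : ℝ) (y : EuclideanSpace ℝ (Fin n)) : ℝ :=
  iteratedDeriv i (fun t' => f t' y) t

/-- Partial derivative in the `j`-th `y` variable. -/
noncomputable def partialY (n : ℕ) (j : Fin n) (f : ℝ → EuclideanSpace ℝ (Fin n) → ℝ)
    (t : ℝ) (y : EuclideanSpace ℝ (Fin n)) : ℝ :=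
  deriv (fun h : ℝ => f t (y + EuclideanSpace.single j h)) 0

/-- Laplacian in all `n+1` variables `(t, y)`. -/
noncomputable def lapTY (n : ℕ) (f : ℝ → EuclideanSpace ℝ (Fin n) → ℝ)
    (t : ℝ) (y : EuclideanSpace ℝ (Fin n)) : ℝ :=
  partialT n f 2 t y + ∑ j : Fin n, partialY n j (partialY n j f) t y

/-- The domain `Ω = {(t,y) : 0 < t < 1, |y| < 1}`. -/
def domTY (n : ℕ) : Set (ℝ × EuclideanSpace ℝ (Fin n)) :=
  {p | 0 < p.1 ∧ p.1 < 1 ∧ ‖p.2‖ < 1}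

section helpers
variable {E : Type*} [NormedAddCommGroup E] [NormedSpace ℝ E]
lemma hasDerivAt_line' (p w : E) (h₀ : ℝ) : HasDerivAt (fun h : ℝ => p + h • w) w h₀ := by
  simpa using ((hasDerivAt_id h₀).smul_const w).const_add p
lemma deriv_along (F : E → ℝ) (p w : E) (h₀ : ℝ) (hF : DifferentiableAt ℝ F (p + h₀ • w)) :
    HasDerivAt (fun h => F (p + h • w)) (fderiv ℝ F (p + h₀ • w) w) h₀ :=
  hF.hasFDerivAt.comp_hasDerivAt h₀ (hasDerivAt_line' p w h₀)
lemma deriv_fderiv_along (F : E → ℝ) (p w z : E) (h₀ : ℝ)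
    (hF : ContDiffAt ℝ 2 F (p + h₀ • w)) :
    HasDerivAt (fun h => fderiv ℝ F (p + h • w) z)
      (fderiv ℝ (fderiv ℝ F) (p + h₀ • w) w z) h₀ := by
  have hdF : DifferentiableAt ℝ (fderiv ℝ F) (p + h₀ • w) :=
    (hF.fderiv_right (m := 1) (le_refl _)).differentiableAt one_ne_zero
  have h1 : HasDerivAt (fun h => fderiv ℝ F (p + h • w))
      (fderiv ℝ (fderiv ℝ F) (p + h₀ • w) w) h₀ :=
    hdF.hasFDerivAt.comp_hasDerivAt h₀ (hasDerivAt_line' p w h₀)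
  simpa using h1.clm_apply (hasDerivAt_const h₀ z)
lemma second_line_deriv (g : E → ℝ) (p₀ w : E) (h₀ : ℝ)
    (hg : ContDiffAt ℝ 2 g (p₀ + h₀ • w)) :
    deriv (fun h => deriv (fun h' => g (p₀ + h' • w)) h) h₀
      = fderiv ℝ (fderiv ℝ g) (p₀ + h₀ • w) w w := by
  have hline : Filter.Tendsto (fun h : ℝ => p₀ + h • w) (nhds h₀) (nhds (p₀ + h₀ • w)) :=
    (hasDerivAt_line' p₀ w h₀).continuousAt
  have hev : ∀ᶠ h in nhds h₀, ContDiffAt ℝ 2 g (p₀ + h • w) :=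
    hline.eventually (hg.eventually (by simp))
  have heq : (fun h => deriv (fun h' => g (p₀ + h' • w)) h)
      =ᶠ[nhds h₀] (fun h => fderiv ℝ g (p₀ + h • w) w) := by
    filter_upwards [hev] with h hh
    exact (deriv_along g p₀ w h (hh.differentiableAt two_ne_zero)).deriv
  rw [heq.deriv_eq]
  exact (deriv_fderiv_along g p₀ w w h₀ hg).deriv
end helpers


lemma key_second_deriv {E : Type*} [NormedAddCommGroup E] [NormedSpace ℝ E]
    (F : E → ℝ) (c c' : ℝ → E) (b : E) (x₀ : ℝ)
    (hF : ContDiffAt ℝ 2 F (c x₀))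
    (hc : ∀ᶠ h in nhds x₀, HasDerivAt c (c' h) h)
    (hc' : HasDerivAt c' b x₀) :
    deriv (fun h => deriv (fun h' => F (c h')) h) x₀
      = fderiv ℝ (fderiv ℝ F) (c x₀) (c' x₀) (c' x₀) + fderiv ℝ F (c x₀) b := by
  have hcont : ContinuousAt c x₀ := (hc.self_of_nhds).continuousAt
  have hFc : ∀ᶠ h in nhds x₀, ContDiffAt ℝ 2 F (c h) :=
    hcont.tendsto.eventually (hF.eventually (by simp))
  have h1 : (fun h => deriv (fun h' => F (c h')) h)
      =ᶠ[nhds x₀] (fun h => (fderiv ℝ F (c h)) (c' h)) := by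
    filter_upwards [hc, hFc] with h hch hFh
    exact ((hFh.differentiableAt two_ne_zero).hasFDerivAt.comp_hasDerivAt h hch).deriv
  rw [h1.deriv_eq]
  have hdF : DifferentiableAt ℝ (fderiv ℝ F) (c x₀) :=
    (hF.fderiv_right (m := 1) (le_refl _)).differentiableAt one_ne_zero
  have h2 : HasDerivAt (fun h => fderiv ℝ F (c h))
      (fderiv ℝ (fderiv ℝ F) (c x₀) (c' x₀)) x₀ :=
    hdF.hasFDerivAt.comp_hasDerivAt x₀ hc.self_of_nhds
  exact (h2.clm_apply hc').deriv

section conversions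
variable {n : ℕ} (f : ℝ → EuclideanSpace ℝ (Fin n) → ℝ) (j : Fin n)
  (t : ℝ) (y : EuclideanSpace ℝ (Fin n))

lemma line_t : ((0:ℝ), y) + t • ((1:ℝ), (0:EuclideanSpace ℝ (Fin n))) = (t, y) := by
  simp [Prod.ext_iff]

lemma line_y (h : ℝ) :
    ((t, y) : ℝ × EuclideanSpace ℝ (Fin n)) + h • ((0:ℝ), EuclideanSpace.single j (1:ℝ))
      = (t, y + EuclideanSpace.single j h) := by
  refine Prod.ext (by simp) ?_
  show y + h • EuclideanSpace.single j (1:ℝ) = y + EuclideanSpace.single j h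
  congr 1
  ext i
  simp [EuclideanSpace.single_apply]

lemma partialT_one_eq (hf : DifferentiableAt ℝ (Function.uncurry f) (t, y)) :
    partialT n f 1 t y
      = fderiv ℝ (Function.uncurry f) (t, y) ((1:ℝ), (0:EuclideanSpace ℝ (Fin n))) := by
  simp only [partialT, iteratedDeriv_one]
  have h := deriv_along (Function.uncurry f) ((0:ℝ), y) ((1:ℝ), (0:EuclideanSpace ℝ (Fin n))) t
    (by rw [line_t]; exact hf)
  rw [line_t] at h
  rw [show (fun t' : ℝ => f t' y)
      = fun t' => Function.uncurry f (((0:ℝ), y) + t' • ((1:ℝ), (0:EuclideanSpace ℝ (Fin n))))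
      from funext fun t' => by rw [line_t]; rfl]
  exact h.deriv

lemma partialY_eq (hf : DifferentiableAt ℝ (Function.uncurry f) (t, y)) :
    partialY n j f t y
      = fderiv ℝ (Function.uncurry f) (t, y) ((0:ℝ), EuclideanSpace.single j (1:ℝ)) := by
  simp only [partialY]
  have h := deriv_along (Function.uncurry f) (t, y) ((0:ℝ), EuclideanSpace.single j (1:ℝ)) 0
    (by simpa using hf)
  simp only [zero_smul, add_zero] at h
  rw [show (fun h' : ℝ => f t (y + EuclideanSpace.single j h'))
      = fun h' => Function.uncurry f ((t, y) + h' • ((0:ℝ), EuclideanSpace.single j (1:ℝ)))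
      from funext fun h' => by rw [line_y]; rfl]
  exact h.deriv

lemma partialT_two_eq (hf : ContDiffAt ℝ 2 (Function.uncurry f) (t, y)) :
    partialT n f 2 t y
      = fderiv ℝ (fderiv ℝ (Function.uncurry f)) (t, y)
          ((1:ℝ), (0:EuclideanSpace ℝ (Fin n))) ((1:ℝ), (0:EuclideanSpace ℝ (Fin n))) := by
  simp only [partialT]
  rw [iteratedDeriv_succ, iteratedDeriv_one]
  have h2 := second_line_deriv (Function.uncurry f) ((0:ℝ), y)
    ((1:ℝ), (0:EuclideanSpace ℝ (Fin n))) t (by rw [line_t]; exact hf)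
  rw [line_t] at h2
  rw [show (fun t'' : ℝ => f t'' y)
      = fun t'' => Function.uncurry f (((0:ℝ), y) + t'' • ((1:ℝ), (0:EuclideanSpace ℝ (Fin n))))
      from funext fun t'' => by rw [line_t]; rfl]
  exact h2

lemma partialY_two_eq (hf : ContDiffAt ℝ 2 (Function.uncurry f) (t, y)) :
    partialY n j (partialY n j f) t y
      = fderiv ℝ (fderiv ℝ (Function.uncurry f)) (t, y)
          ((0:ℝ), EuclideanSpace.single j (1:ℝ)) ((0:ℝ), EuclideanSpace.single j (1:ℝ)) := by
  have hline : Filter.Tendsto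
      (fun h : ℝ => ((t,y) : ℝ × EuclideanSpace ℝ (Fin n))
        + h • ((0:ℝ), EuclideanSpace.single j (1:ℝ))) (nhds 0) (nhds (t, y)) := by
    have := (hasDerivAt_line' ((t,y) : ℝ × EuclideanSpace ℝ (Fin n))
      ((0:ℝ), EuclideanSpace.single j (1:ℝ)) 0).continuousAt.tendsto
    simpa using this
  have hev : ∀ᶠ h in nhds (0:ℝ), ContDiffAt ℝ 2 (Function.uncurry f)
      ((t, y) + h • ((0:ℝ), EuclideanSpace.single j (1:ℝ))) :=
    hline.eventually (hf.eventually (by simp))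
  have heq : (fun h => partialY n j f t (y + EuclideanSpace.single j h))
      =ᶠ[nhds (0:ℝ)] (fun h => fderiv ℝ (Function.uncurry f)
        ((t, y) + h • ((0:ℝ), EuclideanSpace.single j (1:ℝ)))
        ((0:ℝ), EuclideanSpace.single j (1:ℝ))) := by
    filter_upwards [hev] with h hh
    rw [line_y] at hh
    rw [show partialY n j f t (y + EuclideanSpace.single j h)
        = fderiv ℝ (Function.uncurry f) (t, y + EuclideanSpace.single j h)
            ((0:ℝ), EuclideanSpace.single j (1:ℝ))
      from partialY_eq f j t _ (hh.differentiableAt two_ne_zero), line_y]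
  have : partialY n j (partialY n j f) t y
      = deriv (fun h => partialY n j f t (y + EuclideanSpace.single j h)) 0 := rfl
  rw [this, heq.deriv_eq]
  have h3 := (deriv_fderiv_along (Function.uncurry f) (t, y)
    ((0:ℝ), EuclideanSpace.single j (1:ℝ)) ((0:ℝ), EuclideanSpace.single j (1:ℝ)) 0
    (by simpa using hf)).deriv
  simpa using h3

lemma partialYT_eq (hf : ContDiffAt ℝ 2 (Function.uncurry f) (t, y)) :
    partialY n j (partialT n f 1) t y
      = fderiv ℝ (fderiv ℝ (Function.uncurry f)) (t, y)
          ((0:ℝ), EuclideanSpace.single j (1:ℝ)) ((1:ℝ), (0:EuclideanSpace ℝ (Fin n))) := by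
  have hline : Filter.Tendsto
      (fun h : ℝ => ((t,y) : ℝ × EuclideanSpace ℝ (Fin n))
        + h • ((0:ℝ), EuclideanSpace.single j (1:ℝ))) (nhds 0) (nhds (t, y)) := by
    have := (hasDerivAt_line' ((t,y) : ℝ × EuclideanSpace ℝ (Fin n))
      ((0:ℝ), EuclideanSpace.single j (1:ℝ)) 0).continuousAt.tendsto
    simpa using this
  have hev : ∀ᶠ h in nhds (0:ℝ), ContDiffAt ℝ 2 (Function.uncurry f)
      ((t, y) + h • ((0:ℝ), EuclideanSpace.single j (1:ℝ))) :=
    hline.eventually (hf.eventually (by simp))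
  have heq : (fun h => partialT n f 1 t (y + EuclideanSpace.single j h))
      =ᶠ[nhds (0:ℝ)] (fun h => fderiv ℝ (Function.uncurry f)
        ((t, y) + h • ((0:ℝ), EuclideanSpace.single j (1:ℝ)))
        ((1:ℝ), (0:EuclideanSpace ℝ (Fin n)))) := by
    filter_upwards [hev] with h hh
    rw [line_y] at hh
    rw [show partialT n f 1 t (y + EuclideanSpace.single j h)
        = fderiv ℝ (Function.uncurry f) (t, y + EuclideanSpace.single j h)
            ((1:ℝ), (0:EuclideanSpace ℝ (Fin n)))
      from partialT_one_eq f t _ (hh.differentiableAt two_ne_zero), line_y]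
  have : partialY n j (partialT n f 1) t y
      = deriv (fun h => partialT n f 1 t (y + EuclideanSpace.single j h)) 0 := rfl
  rw [this, heq.deriv_eq]
  have h3 := (deriv_fderiv_along (Function.uncurry f) (t, y)
    ((0:ℝ), EuclideanSpace.single j (1:ℝ)) ((1:ℝ), (0:EuclideanSpace ℝ (Fin n))) 0
    (by simpa using hf)).deriv
  simpa using h3

end conversions

/-- The elliptic differential inequality (3.2) for τ = s - t(s,y). -/
theorem tau_elliptic_inequality
    (n : ℕ) (hn : 1 ≤ n)
    (u v : ℝ → EuclideanSpace ℝ (Fin n) → ℝ)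
    (U : Set (ℝ × EuclideanSpace ℝ (Fin n)))
    (hUopen : IsOpen U) (hUsub : closure (domTY n) ⊆ U)
    (hu : ContDiffOn ℝ (⊤ : ℕ∞) (Function.uncurry u) U)
    (hv : ContDiffOn ℝ (⊤ : ℕ∞) (Function.uncurry v) U)
    (huv : ∀ p ∈ closure (domTY n), v p.1 p.2 ≤ u p.1 p.2)
    (hupos : ∀ p ∈ domTY n, 0 < u p.1 p.2)
    (hvpos : ∀ p ∈ domTY n, 0 < v p.1 p.2)
    (hut : ∀ p ∈ domTY n, 0 < partialT n u 1 p.1 p.2)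
    (hu0 : ∀ y : EuclideanSpace ℝ (Fin n), ‖y‖ < 1 → u 0 y = 0)
    (hmain : ∀ (t s : ℝ) (y : EuclideanSpace ℝ (Fin n)), 0 < t → t ≤ s → s < 1 → ‖y‖ < 1 →
      u t y = v s y → lapTY n u t y ≤ lapTY n v s y)
    (T : ℝ → EuclideanSpace ℝ (Fin n) → ℝ)
    (W : Set (ℝ × EuclideanSpace ℝ (Fin n)))
    (hWopen : IsOpen W)
    (hWsub : W ⊆ {p : ℝ × EuclideanSpace ℝ (Fin n) | 0 < p.1 ∧ p.1 < 1 ∧ ‖p.2‖ < 1})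
    (hT2 : ContDiffOn ℝ 2 (Function.uncurry T) W)
    (hTval : ∀ p ∈ W, 0 < T p.1 p.2 ∧ T p.1 p.2 ≤ p.1 ∧ u (T p.1 p.2) p.2 = v p.1 p.2) :
    ∀ p ∈ W,
      lapTY n (fun s y => s - T s y) p.1 p.2
        - (partialT n u 2 (T p.1 p.2) p.2 / partialT n u 1 (T p.1 p.2) p.2) *
            ((partialT n (fun s y => s - T s y) 1 p.1 p.2) ^ 2
              + (∑ j : Fin n, (partialY n j (fun s y => s - T s y) p.1 p.2) ^ 2)
              - 2 * partialT n (fun s y => s - T s y) 1 p.1 p.2)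
        + 2 * ∑ j : Fin n,
            (partialY n j (partialT n u 1) (T p.1 p.2) p.2 / partialT n u 1 (T p.1 p.2) p.2) *
              partialY n j (fun s y => s - T s y) p.1 p.2
      ≤ 0 := by
  intro p hp
  obtain ⟨s, y⟩ := p
  dsimp only at hp ⊢
  obtain ⟨hs0, hs1, hy1⟩ := hWsub hp
  obtain ⟨hT0, hTle, hTeq⟩ := hTval (s, y) hp
  dsimp only at hs0 hs1 hy1 hT0 hTle hTeq
  have hle2 : (2 : WithTop ℕ∞) ≤ ((⊤:ℕ∞) : WithTop ℕ∞) := by norm_cast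
  have hqdom : ((T s y, y) : ℝ × EuclideanSpace ℝ (Fin n)) ∈ domTY n :=
    ⟨hT0, lt_of_le_of_lt hTle hs1, hy1⟩
  have hqU : ((T s y, y) : ℝ × EuclideanSpace ℝ (Fin n)) ∈ U := hUsub (subset_closure hqdom)
  have hpdom : ((s, y) : ℝ × EuclideanSpace ℝ (Fin n)) ∈ domTY n := ⟨hs0, hs1, hy1⟩
  have hpU : ((s, y) : ℝ × EuclideanSpace ℝ (Fin n)) ∈ U := hUsub (subset_closure hpdom)
  have hF2 : ContDiffAt ℝ 2 (Function.uncurry u) (T s y, y) :=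
    (hu.contDiffAt (hUopen.mem_nhds hqU)).of_le hle2
  have hG2 : ContDiffAt ℝ 2 (Function.uncurry v) (s, y) :=
    (hv.contDiffAt (hUopen.mem_nhds hpU)).of_le hle2
  have hΘ2 : ContDiffAt ℝ 2 (Function.uncurry T) (s, y) := hT2.contDiffAt (hWopen.mem_nhds hp)
  have hΘdiff : ∀ r ∈ W, DifferentiableAt ℝ (Function.uncurry T) r := fun r hr =>
    (hT2.contDiffAt (hWopen.mem_nhds hr)).differentiableAt two_ne_zero
  have hΘdF : DifferentiableAt ℝ (fderiv ℝ (Function.uncurry T)) (s, y) :=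
    (hΘ2.fderiv_right (m := 1) (le_refl _)).differentiableAt one_ne_zero
  -- τ = s - T : smoothness and derivatives
  have hτ2 : ContDiffAt ℝ 2 (Function.uncurry fun s' y' => s' - T s' y') (s, y) := by
    have h1 : ContDiffAt ℝ 2 (fun r : ℝ × EuclideanSpace ℝ (Fin n) =>
        r.1 - Function.uncurry T r) (s, y) := contDiffAt_fst.sub hΘ2
    exact h1
  have hτfderiv : ∀ r ∈ W, fderiv ℝ (Function.uncurry fun s' y' => s' - T s' y') r
      = ContinuousLinearMap.fst ℝ ℝ (EuclideanSpace ℝ (Fin n)) - fderiv ℝ (Function.uncurry T) r := by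
    intro r hr
    exact (hasFDerivAt_fst.sub (hΘdiff r hr).hasFDerivAt).fderiv
  have hτsnd : fderiv ℝ (fderiv ℝ (Function.uncurry fun s' y' => s' - T s' y')) (s, y)
      = 0 - fderiv ℝ (fderiv ℝ (Function.uncurry T)) (s, y) := by
    have heq : fderiv ℝ (Function.uncurry fun s' y' => s' - T s' y')
        =ᶠ[nhds ((s, y) : ℝ × EuclideanSpace ℝ (Fin n))]
          (fun r => ContinuousLinearMap.fst ℝ ℝ (EuclideanSpace ℝ (Fin n))
            - fderiv ℝ (Function.uncurry T) r) := by
      filter_upwards [hWopen.mem_nhds hp] with r hr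
      exact hτfderiv r hr
    rw [heq.fderiv_eq]
    exact ((hasFDerivAt_const (ContinuousLinearMap.fst ℝ ℝ (EuclideanSpace ℝ (Fin n)))
      ((s, y) : ℝ × EuclideanSpace ℝ (Fin n))).sub hΘdF.hasFDerivAt).fderiv
  -- second fderiv of v equals that of the composite
  have hGB : fderiv ℝ (fderiv ℝ (Function.uncurry v)) (s, y)
      = fderiv ℝ (fderiv ℝ (fun r : ℝ × EuclideanSpace ℝ (Fin n) =>
          Function.uncurry u (Function.uncurry T r, r.2))) (s, y) := by
    have h0 : Function.uncurry v =ᶠ[nhds ((s, y) : ℝ × EuclideanSpace ℝ (Fin n))]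
        (fun r => Function.uncurry u (Function.uncurry T r, r.2)) := by
      filter_upwards [hWopen.mem_nhds hp] with r hr
      exact ((hTval r hr).2.2).symm
    exact h0.fderiv.fderiv_eq
  -- chain rule for the composite along lines
  have hBw : ∀ w : ℝ × EuclideanSpace ℝ (Fin n),
      fderiv ℝ (fderiv ℝ (fun r : ℝ × EuclideanSpace ℝ (Fin n) =>
          Function.uncurry u (Function.uncurry T r, r.2))) (s, y) w w
        = fderiv ℝ (fderiv ℝ (Function.uncurry u)) (T s y, y)
            (fderiv ℝ (Function.uncurry T) (s, y) w, w.2)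
            (fderiv ℝ (Function.uncurry T) (s, y) w, w.2)
          + fderiv ℝ (Function.uncurry u) (T s y, y)
              (fderiv ℝ (fderiv ℝ (Function.uncurry T)) (s, y) w w, 0) := by
    intro w
    have hΦ2 : ContDiffAt ℝ 2 (fun r : ℝ × EuclideanSpace ℝ (Fin n) =>
        ((Function.uncurry T r, r.2) : ℝ × EuclideanSpace ℝ (Fin n))) (s, y) :=
      hΘ2.prodMk contDiffAt_snd
    have hcomp2 : ContDiffAt ℝ 2 (fun r : ℝ × EuclideanSpace ℝ (Fin n) =>
        Function.uncurry u (Function.uncurry T r, r.2)) (s, y) := by have := hF2.comp (s, y) hΦ2; exact this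
    have hsld := second_line_deriv (fun r : ℝ × EuclideanSpace ℝ (Fin n) =>
      Function.uncurry u (Function.uncurry T r, r.2)) (s, y) w 0 (by simpa using hcomp2)
    simp only [zero_smul, add_zero] at hsld
    rw [← hsld]
    have hevW : ∀ᶠ h in nhds (0 : ℝ), ((s, y) : ℝ × EuclideanSpace ℝ (Fin n)) + h • w ∈ W := by
      have ht : Filter.Tendsto (fun h : ℝ => ((s, y) : ℝ × EuclideanSpace ℝ (Fin n)) + h • w)
          (nhds 0) (nhds (((s, y) : ℝ × EuclideanSpace ℝ (Fin n)) + (0 : ℝ) • w)) :=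
        (hasDerivAt_line' _ _ _).continuousAt.tendsto
      simp only [zero_smul, add_zero] at ht
      exact ht.eventually (hWopen.eventually_mem hp)
    have hc : ∀ᶠ h in nhds (0 : ℝ), HasDerivAt (fun h' : ℝ =>
        ((Function.uncurry T (((s, y) : ℝ × EuclideanSpace ℝ (Fin n)) + h' • w),
          (((s, y) : ℝ × EuclideanSpace ℝ (Fin n)) + h' • w).2) : ℝ × EuclideanSpace ℝ (Fin n)))
        ((fderiv ℝ (Function.uncurry T) (((s, y) : ℝ × EuclideanSpace ℝ (Fin n)) + h • w) w, w.2)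
          : ℝ × EuclideanSpace ℝ (Fin n)) h := by
      filter_upwards [hevW] with h hW
      exact (deriv_along (Function.uncurry T) (s, y) w h (hΘdiff _ hW)).prodMk
        (hasDerivAt_line' y w.2 h)
    have hc' : HasDerivAt (fun h : ℝ =>
        ((fderiv ℝ (Function.uncurry T) (((s, y) : ℝ × EuclideanSpace ℝ (Fin n)) + h • w) w, w.2)
          : ℝ × EuclideanSpace ℝ (Fin n)))
        ((fderiv ℝ (fderiv ℝ (Function.uncurry T)) (s, y) w w, 0)
          : ℝ × EuclideanSpace ℝ (Fin n)) 0 := by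
      have h1 := deriv_fderiv_along (Function.uncurry T) (s, y) w w 0 (by simpa using hΘ2)
      simp only [zero_smul, add_zero] at h1
      exact h1.prodMk (hasDerivAt_const 0 w.2)
    have hkey := key_second_deriv (Function.uncurry u)
      (fun h' : ℝ => ((Function.uncurry T (((s, y) : ℝ × EuclideanSpace ℝ (Fin n)) + h' • w),
        (((s, y) : ℝ × EuclideanSpace ℝ (Fin n)) + h' • w).2) : ℝ × EuclideanSpace ℝ (Fin n)))
      (fun h : ℝ => ((fderiv ℝ (Function.uncurry T)
        (((s, y) : ℝ × EuclideanSpace ℝ (Fin n)) + h • w) w, w.2)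
          : ℝ × EuclideanSpace ℝ (Fin n)))
      ((fderiv ℝ (fderiv ℝ (Function.uncurry T)) (s, y) w w, 0)
        : ℝ × EuclideanSpace ℝ (Fin n)) 0 (by simpa using hF2) hc hc'
    simp only [zero_smul, add_zero] at hkey
    exact hkey
  -- u-side identities
  have H1 : partialT n u 1 (T s y) y
      = fderiv ℝ (Function.uncurry u) (T s y, y) ((1 : ℝ), (0 : EuclideanSpace ℝ (Fin n))) :=
    partialT_one_eq u (T s y) y (hF2.differentiableAt two_ne_zero)
  have H2 : partialT n u 2 (T s y) y
      = fderiv ℝ (fderiv ℝ (Function.uncurry u)) (T s y, y)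
          ((1 : ℝ), (0 : EuclideanSpace ℝ (Fin n))) ((1 : ℝ), (0 : EuclideanSpace ℝ (Fin n))) :=
    partialT_two_eq u (T s y) y hF2
  have H3 : ∀ j : Fin n, partialY n j (partialT n u 1) (T s y) y
      = fderiv ℝ (fderiv ℝ (Function.uncurry u)) (T s y, y)
          ((0 : ℝ), EuclideanSpace.single j (1 : ℝ)) ((1 : ℝ), (0 : EuclideanSpace ℝ (Fin n))) :=
    fun j => partialYT_eq u j (T s y) y hF2
  have H4 : ∀ j : Fin n, partialY n j (partialY n j u) (T s y) y
      = fderiv ℝ (fderiv ℝ (Function.uncurry u)) (T s y, y)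
          ((0 : ℝ), EuclideanSpace.single j (1 : ℝ)) ((0 : ℝ), EuclideanSpace.single j (1 : ℝ)) :=
    fun j => partialY_two_eq u j (T s y) y hF2
  -- v-side identities
  have H5 : partialT n v 2 s y
      = fderiv ℝ (fderiv ℝ (Function.uncurry v)) (s, y)
          ((1 : ℝ), (0 : EuclideanSpace ℝ (Fin n))) ((1 : ℝ), (0 : EuclideanSpace ℝ (Fin n))) :=
    partialT_two_eq v s y hG2
  have H6 : ∀ j : Fin n, partialY n j (partialY n j v) s y
      = fderiv ℝ (fderiv ℝ (Function.uncurry v)) (s, y)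
          ((0 : ℝ), EuclideanSpace.single j (1 : ℝ)) ((0 : ℝ), EuclideanSpace.single j (1 : ℝ)) :=
    fun j => partialY_two_eq v j s y hG2
  -- τ-side identities
  have H7 : partialT n (fun s' y' => s' - T s' y') 1 s y
      = 1 - fderiv ℝ (Function.uncurry T) (s, y) ((1 : ℝ), (0 : EuclideanSpace ℝ (Fin n))) := by
    rw [partialT_one_eq _ s y (hτ2.differentiableAt two_ne_zero), hτfderiv _ hp]
    simp
  have H8 : partialT n (fun s' y' => s' - T s' y') 2 s y
      = -(fderiv ℝ (fderiv ℝ (Function.uncurry T)) (s, y)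
          ((1 : ℝ), (0 : EuclideanSpace ℝ (Fin n))) ((1 : ℝ), (0 : EuclideanSpace ℝ (Fin n)))) := by
    rw [partialT_two_eq _ s y hτ2, hτsnd]
    simp
  have H9 : ∀ j : Fin n, partialY n j (fun s' y' => s' - T s' y') s y
      = -(fderiv ℝ (Function.uncurry T) (s, y) ((0 : ℝ), EuclideanSpace.single j (1 : ℝ))) := by
    intro j
    rw [partialY_eq _ j s y (hτ2.differentiableAt two_ne_zero), hτfderiv _ hp]
    simp
  have H10 : ∀ j : Fin n, partialY n j (partialY n j (fun s' y' => s' - T s' y')) s y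
      = -(fderiv ℝ (fderiv ℝ (Function.uncurry T)) (s, y)
          ((0 : ℝ), EuclideanSpace.single j (1 : ℝ)) ((0 : ℝ), EuclideanSpace.single j (1 : ℝ))) := by
    intro j
    rw [partialY_two_eq _ j s y hτ2, hτsnd]
    simp
  -- expansions of bilinear applications
  have expandDu : ∀ x : ℝ, fderiv ℝ (Function.uncurry u) (T s y, y) ((x, (0 : EuclideanSpace ℝ (Fin n))) : ℝ × EuclideanSpace ℝ (Fin n))
      = x * fderiv ℝ (Function.uncurry u) (T s y, y) ((1 : ℝ), (0 : EuclideanSpace ℝ (Fin n))) := by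
    intro x
    rw [show ((x, (0 : EuclideanSpace ℝ (Fin n))) : ℝ × EuclideanSpace ℝ (Fin n))
        = x • ((1 : ℝ), (0 : EuclideanSpace ℝ (Fin n))) by simp, map_smul, smul_eq_mul]
  have e1 : ∀ x : ℝ, fderiv ℝ (fderiv ℝ (Function.uncurry u)) (T s y, y)
        ((x, (0 : EuclideanSpace ℝ (Fin n))) : ℝ × EuclideanSpace ℝ (Fin n))
        ((x, (0 : EuclideanSpace ℝ (Fin n))) : ℝ × EuclideanSpace ℝ (Fin n))
      = x ^ 2 * fderiv ℝ (fderiv ℝ (Function.uncurry u)) (T s y, y)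
          ((1 : ℝ), (0 : EuclideanSpace ℝ (Fin n))) ((1 : ℝ), (0 : EuclideanSpace ℝ (Fin n))) := by
    intro x
    rw [show ((x, (0 : EuclideanSpace ℝ (Fin n))) : ℝ × EuclideanSpace ℝ (Fin n))
        = x • ((1 : ℝ), (0 : EuclideanSpace ℝ (Fin n))) by simp]
    simp only [map_smul, ContinuousLinearMap.smul_apply, smul_eq_mul]
    ring
  have hsym : IsSymmSndFDerivAt ℝ (Function.uncurry u) (T s y, y) :=
    hF2.isSymmSndFDerivAt (by simp)
  have e2 : ∀ (x : ℝ) (j : Fin n), fderiv ℝ (fderiv ℝ (Function.uncurry u)) (T s y, y)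
        ((x, EuclideanSpace.single j (1 : ℝ)) : ℝ × EuclideanSpace ℝ (Fin n))
        ((x, EuclideanSpace.single j (1 : ℝ)) : ℝ × EuclideanSpace ℝ (Fin n))
      = x ^ 2 * fderiv ℝ (fderiv ℝ (Function.uncurry u)) (T s y, y)
            ((1 : ℝ), (0 : EuclideanSpace ℝ (Fin n))) ((1 : ℝ), (0 : EuclideanSpace ℝ (Fin n)))
          + 2 * x * fderiv ℝ (fderiv ℝ (Function.uncurry u)) (T s y, y)
            ((0 : ℝ), EuclideanSpace.single j (1 : ℝ)) ((1 : ℝ), (0 : EuclideanSpace ℝ (Fin n)))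
          + fderiv ℝ (fderiv ℝ (Function.uncurry u)) (T s y, y)
            ((0 : ℝ), EuclideanSpace.single j (1 : ℝ)) ((0 : ℝ), EuclideanSpace.single j (1 : ℝ)) := by
    intro x j
    rw [show ((x, EuclideanSpace.single j (1 : ℝ)) : ℝ × EuclideanSpace ℝ (Fin n))
        = x • ((1 : ℝ), (0 : EuclideanSpace ℝ (Fin n)))
          + ((0 : ℝ), EuclideanSpace.single j (1 : ℝ)) by simp]
    simp only [map_add, map_smul, ContinuousLinearMap.add_apply,
      ContinuousLinearMap.smul_apply, smul_eq_mul]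
    rw [show fderiv ℝ (fderiv ℝ (Function.uncurry u)) (T s y, y)
        ((1 : ℝ), (0 : EuclideanSpace ℝ (Fin n))) ((0 : ℝ), EuclideanSpace.single j (1 : ℝ))
        = fderiv ℝ (fderiv ℝ (Function.uncurry u)) (T s y, y)
          ((0 : ℝ), EuclideanSpace.single j (1 : ℝ)) ((1 : ℝ), (0 : EuclideanSpace ℝ (Fin n)))
      from hsym _ _]
    ring
  -- the main inequality, translated
  have hineq := hmain (T s y) s y hT0 hTle hs1 hy1 hTeq
  unfold lapTY at hineq
  rw [H2, H5] at hineq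
  simp only [H4, H6] at hineq
  rw [hGB] at hineq
  rw [hBw ((1 : ℝ), (0 : EuclideanSpace ℝ (Fin n)))] at hineq
  simp only [hBw] at hineq
  have e1' := e1 (fderiv ℝ (Function.uncurry T) (s, y) ((1 : ℝ), (0 : EuclideanSpace ℝ (Fin n))))
  have e2' : ∀ j : Fin n, _ := fun j =>
    e2 (fderiv ℝ (Function.uncurry T) (s, y) ((0 : ℝ), EuclideanSpace.single j (1 : ℝ))) j
  have eDu1 := expandDu (fderiv ℝ (fderiv ℝ (Function.uncurry T)) (s, y)
    ((1 : ℝ), (0 : EuclideanSpace ℝ (Fin n))) ((1 : ℝ), (0 : EuclideanSpace ℝ (Fin n))))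
  have eDu2 : ∀ j : Fin n, _ := fun j =>
    expandDu (fderiv ℝ (fderiv ℝ (Function.uncurry T)) (s, y)
      ((0 : ℝ), EuclideanSpace.single j (1 : ℝ)) ((0 : ℝ), EuclideanSpace.single j (1 : ℝ)))
  rw [e1', eDu1] at hineq
  simp only [e2', eDu2] at hineq
  -- rewrite the goal
  unfold lapTY
  rw [H8, H7, H2, H1]
  simp only [H10, H9, H3]
  -- now pure algebra with sums
  have hc1 : (0 : ℝ) < fderiv ℝ (Function.uncurry u) (T s y, y)
      ((1 : ℝ), (0 : EuclideanSpace ℝ (Fin n))) := by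
    have := hut (T s y, y) hqdom
    dsimp only at this
    rwa [H1] at this
  -- transform sums in the goal
  have hg2 : ∑ x : Fin n, (fderiv ℝ (fderiv ℝ (Function.uncurry u)) (T s y, y) ((0 : ℝ), EuclideanSpace.single x (1 : ℝ)) ((1 : ℝ), (0 : EuclideanSpace ℝ (Fin n)))) / (fderiv ℝ (Function.uncurry u) (T s y, y) ((1 : ℝ), (0 : EuclideanSpace ℝ (Fin n)))) * (-(fderiv ℝ (Function.uncurry T) (s, y) ((0 : ℝ), EuclideanSpace.single x (1 : ℝ))))
      = (∑ x : Fin n, (fderiv ℝ (Function.uncurry T) (s, y) ((0 : ℝ), EuclideanSpace.single x (1 : ℝ))) * (fderiv ℝ (fderiv ℝ (Function.uncurry u)) (T s y, y) ((0 : ℝ), EuclideanSpace.single x (1 : ℝ)) ((1 : ℝ), (0 : EuclideanSpace ℝ (Fin n))))) * (-1 / (fderiv ℝ (Function.uncurry u) (T s y, y) ((1 : ℝ), (0 : EuclideanSpace ℝ (Fin n))))) := by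
    rw [Finset.sum_mul]
    exact Finset.sum_congr rfl fun x _ => by ring
  rw [hg2, Finset.sum_neg_distrib]
  simp only [neg_sq]
  -- transform the sum in the hypothesis
  have hsum : ∑ x : Fin n, ((fderiv ℝ (Function.uncurry T) (s, y) ((0 : ℝ), EuclideanSpace.single x (1 : ℝ))) ^ 2 * (fderiv ℝ (fderiv ℝ (Function.uncurry u)) (T s y, y) ((1 : ℝ), (0 : EuclideanSpace ℝ (Fin n))) ((1 : ℝ), (0 : EuclideanSpace ℝ (Fin n))))
        + 2 * (fderiv ℝ (Function.uncurry T) (s, y) ((0 : ℝ), EuclideanSpace.single x (1 : ℝ))) * (fderiv ℝ (fderiv ℝ (Function.uncurry u)) (T s y, y) ((0 : ℝ), EuclideanSpace.single x (1 : ℝ)) ((1 : ℝ), (0 : EuclideanSpace ℝ (Fin n))))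
        + (fderiv ℝ (fderiv ℝ (Function.uncurry u)) (T s y, y) ((0 : ℝ), EuclideanSpace.single x (1 : ℝ)) ((0 : ℝ), EuclideanSpace.single x (1 : ℝ)))
        + (fderiv ℝ (fderiv ℝ (Function.uncurry T)) (s, y) ((0 : ℝ), EuclideanSpace.single x (1 : ℝ)) ((0 : ℝ), EuclideanSpace.single x (1 : ℝ))) * (fderiv ℝ (Function.uncurry u) (T s y, y) ((1 : ℝ), (0 : EuclideanSpace ℝ (Fin n)))))
      = (∑ x : Fin n, (fderiv ℝ (Function.uncurry T) (s, y) ((0 : ℝ), EuclideanSpace.single x (1 : ℝ))) ^ 2) * (fderiv ℝ (fderiv ℝ (Function.uncurry u)) (T s y, y) ((1 : ℝ), (0 : EuclideanSpace ℝ (Fin n))) ((1 : ℝ), (0 : EuclideanSpace ℝ (Fin n))))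
        + (∑ x : Fin n, (fderiv ℝ (Function.uncurry T) (s, y) ((0 : ℝ), EuclideanSpace.single x (1 : ℝ))) * (fderiv ℝ (fderiv ℝ (Function.uncurry u)) (T s y, y) ((0 : ℝ), EuclideanSpace.single x (1 : ℝ)) ((1 : ℝ), (0 : EuclideanSpace ℝ (Fin n))))) * 2
        + ((∑ x : Fin n, (fderiv ℝ (fderiv ℝ (Function.uncurry u)) (T s y, y) ((0 : ℝ), EuclideanSpace.single x (1 : ℝ)) ((0 : ℝ), EuclideanSpace.single x (1 : ℝ))))
            + (∑ x : Fin n, (fderiv ℝ (fderiv ℝ (Function.uncurry T)) (s, y) ((0 : ℝ), EuclideanSpace.single x (1 : ℝ)) ((0 : ℝ), EuclideanSpace.single x (1 : ℝ)))) * (fderiv ℝ (Function.uncurry u) (T s y, y) ((1 : ℝ), (0 : EuclideanSpace ℝ (Fin n))))) := by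
    rw [Finset.sum_mul, Finset.sum_mul, Finset.sum_mul, ← Finset.sum_add_distrib,
      ← Finset.sum_add_distrib, ← Finset.sum_add_distrib]
    exact Finset.sum_congr rfl fun x _ => by ring
  rw [hsum] at hineq
  -- abbreviate
  set c1 : ℝ := fderiv ℝ (Function.uncurry u) (T s y, y) ((1 : ℝ), (0 : EuclideanSpace ℝ (Fin n))) with hc1def
  set Att : ℝ := fderiv ℝ (fderiv ℝ (Function.uncurry u)) (T s y, y) ((1 : ℝ), (0 : EuclideanSpace ℝ (Fin n))) ((1 : ℝ), (0 : EuclideanSpace ℝ (Fin n))) with hAttdef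
  set a : ℝ := fderiv ℝ (Function.uncurry T) (s, y) ((1 : ℝ), (0 : EuclideanSpace ℝ (Fin n))) with hadef
  set btt : ℝ := fderiv ℝ (fderiv ℝ (Function.uncurry T)) (s, y) ((1 : ℝ), (0 : EuclideanSpace ℝ (Fin n))) ((1 : ℝ), (0 : EuclideanSpace ℝ (Fin n))) with hbttdef
  set S1 : ℝ := ∑ x : Fin n, (fderiv ℝ (Function.uncurry T) (s, y) ((0 : ℝ), EuclideanSpace.single x (1 : ℝ))) ^ 2 with hS1def
  set S2 : ℝ := ∑ x : Fin n, (fderiv ℝ (fderiv ℝ (Function.uncurry T)) (s, y) ((0 : ℝ), EuclideanSpace.single x (1 : ℝ)) ((0 : ℝ), EuclideanSpace.single x (1 : ℝ))) with hS2def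
  set S3 : ℝ := ∑ x : Fin n, (fderiv ℝ (Function.uncurry T) (s, y) ((0 : ℝ), EuclideanSpace.single x (1 : ℝ))) * (fderiv ℝ (fderiv ℝ (Function.uncurry u)) (T s y, y) ((0 : ℝ), EuclideanSpace.single x (1 : ℝ)) ((1 : ℝ), (0 : EuclideanSpace ℝ (Fin n)))) with hS3def
  set SA : ℝ := ∑ x : Fin n, (fderiv ℝ (fderiv ℝ (Function.uncurry u)) (T s y, y) ((0 : ℝ), EuclideanSpace.single x (1 : ℝ)) ((0 : ℝ), EuclideanSpace.single x (1 : ℝ))) with hSAdef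
  have key : Att * (1 - a ^ 2 - S1) - 2 * S3 - c1 * (btt + S2) ≤ 0 := by nlinarith [hineq]
  have hLhs : -btt + -S2 - Att / c1 * ((1 - a) ^ 2 + S1 - 2 * (1 - a)) + 2 * (S3 * (-1 / c1))
      = (Att * (1 - a ^ 2 - S1) - 2 * S3 - c1 * (btt + S2)) / c1 := by
    field_simp
    ring
  rw [hLhs]
  exact div_nonpos_of_nonpos_of_nonneg key hc1.le
end

section
/- Under the higher-dimensional setup (u ≥ v smooth on the closure of Ω = (0,1) × {|y|<1}, u > 0, v > 0, ∂_t u > 0 in Ω, u(0,y) = 0, ∂_t u(0,0) = 0, main Laplacian comparison condition, finite-order vanishing at t = 0), if k = 2, where k and l are the least indices i with ∂_t^i u(0,0) ≠ 0 and ∂_t^i v(0,0) ≠ 0, then l = 2 and ∂_t² v(0,0) = ∂_t² u(0,0). -/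
open Set

/- ### Auxiliary machinery -/

variable {n : ℕ}

noncomputable def pdv (n : ℕ) (e : ℝ × EuclideanSpace ℝ (Fin n))
    (F : ℝ × EuclideanSpace ℝ (Fin n) → ℝ) (p : ℝ × EuclideanSpace ℝ (Fin n)) : ℝ :=
  fderiv ℝ F p e

noncomputable def eT (n : ℕ) : ℝ × EuclideanSpace ℝ (Fin n) := ((1 : ℝ), 0)
noncomputable def eY (n : ℕ) (j : Fin n) : ℝ × EuclideanSpace ℝ (Fin n) :=
  ((0 : ℝ), EuclideanSpace.single j 1)

lemma pdv_contDiffOn {U : Set (ℝ × EuclideanSpace ℝ (Fin n))} (hU : IsOpen U)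
    {F : ℝ × EuclideanSpace ℝ (Fin n) → ℝ} (hF : ContDiffOn ℝ (⊤ : ℕ∞) F U)
    (e : ℝ × EuclideanSpace ℝ (Fin n)) : ContDiffOn ℝ (⊤ : ℕ∞) (pdv n e F) U := by
  have h1 : ContDiffOn ℝ (⊤ : ℕ∞) (fderiv ℝ F) U :=
    hF.fderiv_of_isOpen hU (by exact_mod_cast le_top)
  exact (ContinuousLinearMap.apply ℝ ℝ e).contDiff.comp_contDiffOn h1

lemma hasDerivAt_t {F : ℝ × EuclideanSpace ℝ (Fin n) → ℝ} {p : ℝ × EuclideanSpace ℝ (Fin n)}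
    (hF : DifferentiableAt ℝ F p) :
    HasDerivAt (fun t' => F (t', p.2)) (pdv n (eT n) F p) p.1 := by
  have h1 : HasDerivAt (fun t' : ℝ => (t', p.2)) ((1 : ℝ), (0 : EuclideanSpace ℝ (Fin n))) p.1 :=
    (hasDerivAt_id p.1).prodMk (hasDerivAt_const p.1 p.2)
  have := hF.hasFDerivAt.comp_hasDerivAt p.1 h1
  simpa [pdv, eT, Function.comp_def] using this

lemma single_hasDerivAt (j : Fin n) : HasDerivAt
    (fun h : ℝ => (EuclideanSpace.single j h : EuclideanSpace ℝ (Fin n)))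
    (EuclideanSpace.single j 1) 0 := by
  have : (fun h : ℝ => (EuclideanSpace.single j h : EuclideanSpace ℝ (Fin n)))
      = fun h : ℝ => h • EuclideanSpace.single j (1 : ℝ) := by
    funext h
    ext i
    by_cases hij : i = j <;> simp [EuclideanSpace.single_apply, hij]
  rw [this]
  simpa using (hasDerivAt_id (0:ℝ)).smul_const (EuclideanSpace.single j (1:ℝ))

lemma hasDerivAt_y {F : ℝ × EuclideanSpace ℝ (Fin n) → ℝ} {p : ℝ × EuclideanSpace ℝ (Fin n)}
    (hF : DifferentiableAt ℝ F p) (j : Fin n) :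
    HasDerivAt (fun h : ℝ => F (p.1, p.2 + EuclideanSpace.single j h))
      (pdv n (eY n j) F p) 0 := by
  have hs := single_hasDerivAt (n := n) j
  have h1 : HasDerivAt (fun h : ℝ => (p.1, p.2 + EuclideanSpace.single j h))
      ((0 : ℝ), EuclideanSpace.single j (1:ℝ)) 0 :=
    (hasDerivAt_const 0 p.1).prodMk (hs.const_add p.2)
  have key : (p.1, p.2 + EuclideanSpace.single j (0:ℝ)) = p := by
    ext <;> simp [EuclideanSpace.single]
  have h2 : HasFDerivAt F (fderiv ℝ F p) (p.1, p.2 + EuclideanSpace.single j (0:ℝ)) := by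
    rw [key]; exact hF.hasFDerivAt
  have := h2.comp_hasDerivAt 0 h1
  simpa [pdv, eY, Function.comp_def] using this

section eqs
variable {U : Set (ℝ × EuclideanSpace ℝ (Fin n))} (hU : IsOpen U)
  {f : ℝ → EuclideanSpace ℝ (Fin n) → ℝ}
  (hf : ContDiffOn ℝ (⊤ : ℕ∞) (Function.uncurry f) U)

include hU hf

lemma diffAt (p : ℝ × EuclideanSpace ℝ (Fin n)) (hp : p ∈ U) :
    DifferentiableAt ℝ (Function.uncurry f) p :=
  (hf.differentiableOn (by simp)).differentiableAt (hU.mem_nhds hp)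

lemma pdv_diffAt (e : ℝ × EuclideanSpace ℝ (Fin n)) (p : ℝ × EuclideanSpace ℝ (Fin n))
    (hp : p ∈ U) : DifferentiableAt ℝ (pdv n e (Function.uncurry f)) p :=
  ((pdv_contDiffOn hU hf e).differentiableOn
    (by simp)).differentiableAt (hU.mem_nhds hp)

lemma partialT_two_eq_s11 (p : ℝ × EuclideanSpace ℝ (Fin n)) (hp : p ∈ U) :
    partialT n f 2 p.1 p.2
      = pdv n (eT n) (pdv n (eT n) (Function.uncurry f)) p := by
  have hev : ∀ᶠ t' in nhds p.1, (t', p.2) ∈ U := by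
    have : ContinuousAt (fun t' : ℝ => (t', p.2)) p.1 := by fun_prop
    exact this.eventually_mem (hU.mem_nhds (by simpa using hp))
  have h1 : (fun t' => deriv (fun t'' => f t'' p.2) t')
      =ᶠ[nhds p.1] fun t' => pdv n (eT n) (Function.uncurry f) (t', p.2) := by
    filter_upwards [hev] with t' ht'
    exact (hasDerivAt_t (p := (t', p.2)) (diffAt hU hf _ ht')).deriv
  have h2 : HasDerivAt (fun t' => pdv n (eT n) (Function.uncurry f) (t', p.2))
      (pdv n (eT n) (pdv n (eT n) (Function.uncurry f)) p) p.1 :=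
    hasDerivAt_t (pdv_diffAt hU hf _ p hp)
  calc partialT n f 2 p.1 p.2
      = deriv (deriv (fun t'' => f t'' p.2)) p.1 := by
        simp [partialT, iteratedDeriv_succ, iteratedDeriv_one]
    _ = deriv (fun t' => pdv n (eT n) (Function.uncurry f) (t', p.2)) p.1 := h1.deriv_eq
    _ = pdv n (eT n) (pdv n (eT n) (Function.uncurry f)) p := h2.deriv

lemma partialYY_eq (j : Fin n) (p : ℝ × EuclideanSpace ℝ (Fin n)) (hp : p ∈ U) :
    partialY n j (partialY n j f) p.1 p.2
      = pdv n (eY n j) (pdv n (eY n j) (Function.uncurry f)) p := by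
  have hev : ∀ᶠ h in nhds (0:ℝ), (p.1, p.2 + EuclideanSpace.single j h) ∈ U := by
    have hc : ContinuousAt (fun h : ℝ => (p.1, p.2 + EuclideanSpace.single j h)) 0 :=
      continuousAt_const.prodMk
        (continuousAt_const.add (single_hasDerivAt (n := n) j).continuousAt)
    have h0 : ((p.1, p.2 + EuclideanSpace.single j (0:ℝ)) : ℝ × EuclideanSpace ℝ (Fin n)) = p := by
      ext <;> simp [EuclideanSpace.single]
    exact hc.eventually_mem (by rw [h0]; exact hU.mem_nhds hp)
  have h1 : (fun h => partialY n j f p.1 (p.2 + EuclideanSpace.single j h))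
      =ᶠ[nhds (0:ℝ)] fun h => pdv n (eY n j) (Function.uncurry f)
        (p.1, p.2 + EuclideanSpace.single j h) := by
    filter_upwards [hev] with h hh
    exact (hasDerivAt_y (p := (p.1, p.2 + EuclideanSpace.single j h))
      (diffAt hU hf _ hh) j).deriv
  have h2 : HasDerivAt (fun h => pdv n (eY n j) (Function.uncurry f)
      (p.1, p.2 + EuclideanSpace.single j h))
      (pdv n (eY n j) (pdv n (eY n j) (Function.uncurry f)) p) 0 :=
    hasDerivAt_y (pdv_diffAt hU hf _ p hp) j
  calc partialY n j (partialY n j f) p.1 p.2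
      = deriv (fun h => partialY n j f p.1 (p.2 + EuclideanSpace.single j h)) 0 := rfl
    _ = pdv n (eY n j) (pdv n (eY n j) (Function.uncurry f)) p := by
        rw [h1.deriv_eq]; exact h2.deriv

end eqs

noncomputable def LapF (n : ℕ) (F : ℝ × EuclideanSpace ℝ (Fin n) → ℝ)
    (p : ℝ × EuclideanSpace ℝ (Fin n)) : ℝ :=
  pdv n (eT n) (pdv n (eT n) F) p + ∑ j : Fin n, pdv n (eY n j) (pdv n (eY n j) F) p

lemma lapTY_eq {U : Set (ℝ × EuclideanSpace ℝ (Fin n))} (hU : IsOpen U)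
    {f : ℝ → EuclideanSpace ℝ (Fin n) → ℝ}
    (hf : ContDiffOn ℝ (⊤ : ℕ∞) (Function.uncurry f) U)
    (p : ℝ × EuclideanSpace ℝ (Fin n)) (hp : p ∈ U) :
    lapTY n f p.1 p.2 = LapF n (Function.uncurry f) p := by
  rw [lapTY, LapF, partialT_two_eq_s11 hU hf p hp]
  congr 1
  exact Finset.sum_congr rfl fun j _ => partialYY_eq hU hf j p hp

lemma lapF_continuousOn {U : Set (ℝ × EuclideanSpace ℝ (Fin n))} (hU : IsOpen U)
    {f : ℝ → EuclideanSpace ℝ (Fin n) → ℝ}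
    (hf : ContDiffOn ℝ (⊤ : ℕ∞) (Function.uncurry f) U) :
    ContinuousOn (LapF n (Function.uncurry f)) U := by
  apply ContinuousOn.add
  · exact (pdv_contDiffOn hU (pdv_contDiffOn hU hf _) _).continuousOn
  · exact continuousOn_finset_sum _ fun j _ =>
      (pdv_contDiffOn hU (pdv_contDiffOn hU hf _) _).continuousOn

/- ### vanishing of tangential second derivatives at the boundary -/

lemma partialY_zero_of_boundary {f : ℝ → EuclideanSpace ℝ (Fin n) → ℝ}
    (hf0 : ∀ y : EuclideanSpace ℝ (Fin n), ‖y‖ < 1 → f 0 y = 0) (j : Fin n)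
    {y : EuclideanSpace ℝ (Fin n)} (hy : ‖y‖ < 1) : partialY n j f 0 y = 0 := by
  have hev : (fun h : ℝ => f 0 (y + EuclideanSpace.single j h))
      =ᶠ[nhds (0:ℝ)] fun _ => (0:ℝ) := by
    rw [Filter.eventuallyEq_iff_exists_mem]
    refine ⟨Metric.ball 0 (1 - ‖y‖), Metric.ball_mem_nhds _ (by linarith), fun h hh => ?_⟩
    apply hf0
    have h1 : ‖y + EuclideanSpace.single j h‖ ≤ ‖y‖ + ‖(EuclideanSpace.single j h :
        EuclideanSpace ℝ (Fin n))‖ := norm_add_le _ _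
    have h2 : ‖(EuclideanSpace.single j h : EuclideanSpace ℝ (Fin n))‖ = |h| := by
      rw [EuclideanSpace.norm_single]; exact Real.norm_eq_abs h
    have h3 : |h| < 1 - ‖y‖ := by simpa [Real.dist_eq] using hh
    linarith
  rw [partialY, hev.deriv_eq, deriv_const]

lemma partialYY_zero_of_boundary {f : ℝ → EuclideanSpace ℝ (Fin n) → ℝ}
    (hf0 : ∀ y : EuclideanSpace ℝ (Fin n), ‖y‖ < 1 → f 0 y = 0) (j : Fin n) :
    partialY n j (partialY n j f) 0 0 = 0 := by
  have hev : (fun h : ℝ => partialY n j f 0 ((0 : EuclideanSpace ℝ (Fin n))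
      + EuclideanSpace.single j h)) =ᶠ[nhds (0:ℝ)] fun _ => (0:ℝ) := by
    rw [Filter.eventuallyEq_iff_exists_mem]
    refine ⟨Metric.ball 0 1, Metric.ball_mem_nhds _ one_pos, fun h hh => ?_⟩
    apply partialY_zero_of_boundary hf0 j
    have h2 : ‖(EuclideanSpace.single j h : EuclideanSpace ℝ (Fin n))‖ = |h| := by
      rw [EuclideanSpace.norm_single]; exact Real.norm_eq_abs h
    have h3 : |h| < 1 := by simpa [Real.dist_eq] using hh
    simpa [h2] using h3
  rw [partialY, hev.deriv_eq, deriv_const]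

/- ### one-dimensional lemmas -/

lemma deriv_nonneg_right {f : ℝ → ℝ} {ε : ℝ} (hε : 0 < ε) (h0 : f 0 = 0)
    (hpos : ∀ t : ℝ, 0 < t → t < ε → 0 ≤ f t) (hd : DifferentiableAt ℝ f 0) :
    0 ≤ deriv f 0 := by
  have hslope : Filter.Tendsto (slope f 0) (nhdsWithin 0 {(0:ℝ)}ᶜ) (nhds (deriv f 0)) :=
    hasDerivAt_iff_tendsto_slope.1 hd.hasDerivAt
  have hmono : nhdsWithin (0:ℝ) (Ioi 0) ≤ nhdsWithin 0 {(0:ℝ)}ᶜ :=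
    nhdsWithin_mono 0 (fun x hx => ne_of_gt hx)
  refine ge_of_tendsto (hslope.mono_left hmono) ?_
  filter_upwards [Ioo_mem_nhdsGT_of_mem (⟨le_refl 0, hε⟩ : (0:ℝ) ∈ Ico 0 ε)] with t ht
  rw [slope_def_field, h0]
  have h1 := hpos t ht.1 ht.2
  have h2 : (0:ℝ) < t := ht.1
  rw [sub_zero, sub_zero]
  positivity

lemma deriv2_nonneg_right {f : ℝ → ℝ} {I : Set ℝ} (hI : IsOpen I) (h0I : (0:ℝ) ∈ I)
    (hf : ContDiffOn ℝ (⊤ : ℕ∞) f I) {ε : ℝ} (hε : 0 < ε) (h0 : f 0 = 0)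
    (h1 : deriv f 0 = 0) (hpos : ∀ t : ℝ, 0 < t → t < ε → 0 ≤ f t) :
    0 ≤ deriv (deriv f) 0 := by
  by_contra hcon
  push_neg at hcon
  have hd1 : ContDiffOn ℝ (⊤ : ℕ∞) (deriv f) I :=
    hf.deriv_of_isOpen hI (by exact_mod_cast le_top)
  have hc2 : ContinuousOn (deriv (deriv f)) I :=
    hd1.continuousOn_deriv_of_isOpen hI (by exact_mod_cast le_top)
  have hcAt : ContinuousAt (deriv (deriv f)) 0 :=
    hc2.continuousAt (hI.mem_nhds h0I)
  have hev : ∀ᶠ x in nhds (0:ℝ), deriv (deriv f) x < 0 ∧ x ∈ I :=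
    (hcAt.eventually_lt continuousAt_const hcon).and (hI.eventually_mem h0I)
  obtain ⟨δ, hδpos, hball⟩ := Metric.eventually_nhds_iff.1 hev
  set δ' : ℝ := min (δ/2) (ε/2) with hδ'def
  have hδ'pos : 0 < δ' := lt_min (by linarith) (by linarith)
  have hδ'ε : δ' < ε := lt_of_le_of_lt (min_le_right _ _) (by linarith)
  have hmem : ∀ x ∈ Icc (0:ℝ) δ', deriv (deriv f) x < 0 ∧ x ∈ I := by
    intro x hx
    apply hball
    rw [Real.dist_eq, sub_zero, abs_of_nonneg hx.1]
    exact lt_of_le_of_lt (hx.2.trans (min_le_left _ _)) (by linarith)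
  have hsubI : Icc (0:ℝ) δ' ⊆ I := fun x hx => (hmem x hx).2
  have hanti1 : StrictAntiOn (deriv f) (Icc 0 δ') := by
    apply strictAntiOn_of_deriv_neg (convex_Icc _ _) (hd1.continuousOn.mono hsubI)
    intro x hx
    rw [interior_Icc] at hx
    exact (hmem x ⟨hx.1.le, hx.2.le⟩).1
  have hderivneg : ∀ x ∈ interior (Icc (0:ℝ) δ'), deriv f x < 0 := by
    intro x hx
    rw [interior_Icc] at hx
    have := hanti1 (left_mem_Icc.2 hδ'pos.le) ⟨hx.1.le, hx.2.le⟩ hx.1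
    rw [h1] at this
    exact this
  have hanti2 : StrictAntiOn f (Icc 0 δ') :=
    strictAntiOn_of_deriv_neg (convex_Icc _ _) (hf.continuousOn.mono hsubI) hderivneg
  have hlt : f δ' < f 0 :=
    hanti2 (left_mem_Icc.2 hδ'pos.le) (right_mem_Icc.2 hδ'pos.le) hδ'pos
  have := hpos δ' hδ'pos hδ'ε
  rw [h0] at hlt
  linarith

/- ### closure of the domain -/

lemma mem_closure_domTY {t : ℝ} {y : EuclideanSpace ℝ (Fin n)}
    (ht0 : 0 ≤ t) (ht1 : t < 1) (hy : ‖y‖ < 1) : ((t, y) : ℝ × EuclideanSpace ℝ (Fin n)) ∈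
      closure (domTY n) := by
  have htend : Filter.Tendsto (fun s : ℝ => ((s, y) : ℝ × EuclideanSpace ℝ (Fin n)))
      (nhdsWithin t (Ioi t)) (nhds (t, y)) :=
    ((continuousAt_id.prodMk continuousAt_const)).tendsto.mono_left nhdsWithin_le_nhds
  apply mem_closure_of_tendsto htend
  filter_upwards [Ioo_mem_nhdsGT_of_mem (⟨le_refl t, ht1⟩ : t ∈ Ico t 1)] with s hs
  exact ⟨lt_of_le_of_lt ht0 hs.1, hs.2, hy⟩

/-- (6.1), Step A for k = 2: l = 2 and b₂(0) = a₂(0). -/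
theorem stepA_k_two
    (n : ℕ) (hn : 1 ≤ n)
    (u v : ℝ → EuclideanSpace ℝ (Fin n) → ℝ)
    (U : Set (ℝ × EuclideanSpace ℝ (Fin n)))
    (hUopen : IsOpen U) (hUsub : closure (domTY n) ⊆ U)
    (hu : ContDiffOn ℝ (⊤ : ℕ∞) (Function.uncurry u) U)
    (hv : ContDiffOn ℝ (⊤ : ℕ∞) (Function.uncurry v) U)
    (huv : ∀ p ∈ closure (domTY n), v p.1 p.2 ≤ u p.1 p.2)
    (hupos : ∀ p ∈ domTY n, 0 < u p.1 p.2)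
    (hvpos : ∀ p ∈ domTY n, 0 < v p.1 p.2)
    (hut : ∀ p ∈ domTY n, 0 < partialT n u 1 p.1 p.2)
    (hu0 : ∀ y : EuclideanSpace ℝ (Fin n), ‖y‖ < 1 → u 0 y = 0)
    (hut0 : partialT n u 1 0 0 = 0)
    (hmain : ∀ (t s : ℝ) (y : EuclideanSpace ℝ (Fin n)), 0 < t → t ≤ s → s < 1 → ‖y‖ < 1 →
      u t y = v s y → lapTY n u t y ≤ lapTY n v s y)
    (hk : IsLeast {i : ℕ | 1 ≤ i ∧ partialT n u i 0 0 ≠ 0} 2)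
    (hvfin : ∃ i : ℕ, 1 ≤ i ∧ partialT n v i 0 0 ≠ 0) :
    IsLeast {i : ℕ | 1 ≤ i ∧ partialT n v i 0 0 ≠ 0} 2 ∧
      partialT n v 2 0 0 = partialT n u 2 0 0 := by
  have hnorm0 : ‖(0 : EuclideanSpace ℝ (Fin n))‖ < 1 := by simp
  -- membership facts
  have hclmem : ∀ t : ℝ, 0 ≤ t → t < 1 →
      ((t, (0 : EuclideanSpace ℝ (Fin n))) : ℝ × EuclideanSpace ℝ (Fin n)) ∈
        closure (domTY n) := fun t h0 h1 => mem_closure_domTY h0 h1 hnorm0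
  have h00U : ((0:ℝ), (0 : EuclideanSpace ℝ (Fin n))) ∈ U :=
    hUsub (hclmem 0 le_rfl one_pos)
  -- the open interval where (t,0) ∈ U
  set I : Set ℝ := {t : ℝ | ((t, (0 : EuclideanSpace ℝ (Fin n))) :
      ℝ × EuclideanSpace ℝ (Fin n)) ∈ U} with hIdef
  have hIopen : IsOpen I :=
    hUopen.preimage (continuous_id.prodMk continuous_const)
  have h0I : (0:ℝ) ∈ I := h00U
  have hIsub : ∀ t : ℝ, 0 < t → t < 1 → t ∈ I := fun t h0 h1 =>
    hUsub (subset_closure ⟨h0, h1, hnorm0⟩)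
  -- restrictions to the t-axis
  set φ : ℝ → ℝ := fun t => u t 0 with hφdef
  set ψ : ℝ → ℝ := fun t => v t 0 with hψdef
  have hline : ContDiffOn ℝ (⊤ : ℕ∞) (fun t : ℝ =>
      ((t, (0 : EuclideanSpace ℝ (Fin n))) : ℝ × EuclideanSpace ℝ (Fin n))) I :=
    (contDiff_id.prodMk contDiff_const).contDiffOn
  have hφ : ContDiffOn ℝ (⊤ : ℕ∞) φ I := hu.comp hline (fun t ht => ht)
  have hψ : ContDiffOn ℝ (⊤ : ℕ∞) ψ I := hv.comp hline (fun t ht => ht)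
  have hφdiff : DifferentiableAt ℝ φ 0 :=
    (hφ.differentiableOn (by simp)).differentiableAt (hIopen.mem_nhds h0I)
  have hψdiff : DifferentiableAt ℝ ψ 0 :=
    (hψ.differentiableOn (by simp)).differentiableAt (hIopen.mem_nhds h0I)
  -- basic values
  have hφ0 : φ 0 = 0 := hu0 0 hnorm0
  have hφpos : ∀ t : ℝ, 0 < t → t < 1 → 0 ≤ φ t := fun t h0 h1 =>
    (hupos (t, 0) ⟨h0, h1, hnorm0⟩).le
  have hψpos : ∀ t : ℝ, 0 < t → t < 1 → 0 ≤ ψ t := fun t h0 h1 =>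
    (hvpos (t, 0) ⟨h0, h1, hnorm0⟩).le
  have hφψ : ∀ t : ℝ, 0 < t → t < 1 → 0 ≤ φ t - ψ t := fun t h0 h1 =>
    sub_nonneg.2 (huv (t, 0) (hclmem t h0.le h1))
  -- v vanishes on the bottom boundary
  have hv0 : ∀ y : EuclideanSpace ℝ (Fin n), ‖y‖ < 1 → v 0 y = 0 := by
    intro y hy
    have hle : v 0 y ≤ 0 := by
      have := huv (0, y) (mem_closure_domTY le_rfl one_pos hy)
      simpa [hu0 y hy] using this
    have hyU : ((0:ℝ), y) ∈ U := hUsub (mem_closure_domTY le_rfl one_pos hy)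
    have hcv : ContinuousAt (fun t : ℝ => v t y) 0 := by
      have h1 : ContinuousAt (Function.uncurry v) (0, y) :=
        hv.continuousOn.continuousAt (hUopen.mem_nhds hyU)
      have h2 : ContinuousAt (fun t : ℝ => ((t, y) : ℝ × EuclideanSpace ℝ (Fin n))) 0 :=
        continuousAt_id.prodMk continuousAt_const
      exact ContinuousAt.comp (x := (0:ℝ)) (g := Function.uncurry v) h1 h2
    have hge : 0 ≤ v 0 y := by
      refine ge_of_tendsto (hcv.tendsto.mono_left nhdsWithin_le_nhds :
        Filter.Tendsto (fun t : ℝ => v t y) (nhdsWithin 0 (Ioi 0)) (nhds (v 0 y))) ?_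
      filter_upwards [Ioo_mem_nhdsGT_of_mem (⟨le_refl (0:ℝ), one_pos⟩ : (0:ℝ) ∈ Ico 0 1)]
        with t ht
      exact (hvpos (t, y) ⟨ht.1, ht.2, hy⟩).le
    linarith
  have hψ0 : ψ 0 = 0 := hv0 0 hnorm0
  -- first derivatives at 0
  have hdφ0 : deriv φ 0 = 0 := by
    have : partialT n u 1 0 0 = deriv φ 0 := by
      simp [partialT, iteratedDeriv_one, hφdef]
    rw [← this]; exact hut0
  have hdψ0 : deriv ψ 0 = 0 := by
    have h1 : 0 ≤ deriv ψ 0 := deriv_nonneg_right one_pos hψ0 hψpos hψdiff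
    have h2 : 0 ≤ deriv (fun t => φ t - ψ t) 0 := by
      apply deriv_nonneg_right one_pos (by simp [hφ0, hψ0]) hφψ (hφdiff.sub hψdiff)
    rw [deriv_fun_sub hφdiff hψdiff, hdφ0] at h2
    linarith
  -- identify partialT 2 with second derivatives of φ, ψ
  have hpT2u : partialT n u 2 0 0 = deriv (deriv φ) 0 := by
    simp [partialT, iteratedDeriv_succ, iteratedDeriv_one, hφdef]
  have hpT2v : partialT n v 2 0 0 = deriv (deriv ψ) 0 := by
    simp [partialT, iteratedDeriv_succ, iteratedDeriv_one, hψdef]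
  -- b ≤ a
  have hba : deriv (deriv ψ) 0 ≤ deriv (deriv φ) 0 := by
    have hsub : ContDiffOn ℝ (⊤ : ℕ∞) (fun t => φ t - ψ t) I := hφ.sub hψ
    have hdsub0 : deriv (fun t => φ t - ψ t) 0 = 0 := by
      rw [deriv_fun_sub hφdiff hψdiff, hdφ0, hdψ0]; ring
    have h2 := deriv2_nonneg_right hIopen h0I hsub one_pos (by simp [hφ0, hψ0])
      hdsub0 hφψ
    -- rewrite deriv (deriv (φ - ψ)) 0
    have hev : deriv (fun t => φ t - ψ t)
        =ᶠ[nhds (0:ℝ)] fun t => deriv φ t - deriv ψ t := by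
      filter_upwards [hIopen.mem_nhds h0I] with t ht
      exact deriv_fun_sub
        ((hφ.differentiableOn (by simp)).differentiableAt
          (hIopen.mem_nhds ht))
        ((hψ.differentiableOn (by simp)).differentiableAt
          (hIopen.mem_nhds ht))
    have hdd : deriv (deriv (fun t => φ t - ψ t)) 0
        = deriv (deriv φ) 0 - deriv (deriv ψ) 0 := by
      rw [hev.deriv_eq]
      apply deriv_fun_sub
      · exact ((hφ.deriv_of_isOpen (m := (⊤ : ℕ∞)) hIopen
          (by exact_mod_cast le_top)).differentiableOn
          (by simp)).differentiableAt (hIopen.mem_nhds h0I)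
      · exact ((hψ.deriv_of_isOpen (m := (⊤ : ℕ∞)) hIopen
          (by exact_mod_cast le_top)).differentiableOn
          (by simp)).differentiableAt (hIopen.mem_nhds h0I)
    rw [hdd] at h2
    linarith
  -- Laplacians at the corner point reduce to second t-derivatives
  have hlapu0 : lapTY n u 0 0 = deriv (deriv φ) 0 := by
    rw [lapTY, ← hpT2u]
    have : ∑ j : Fin n, partialY n j (partialY n j u) 0 0 = 0 :=
      Finset.sum_eq_zero fun j _ => partialYY_zero_of_boundary hu0 j
    rw [this, add_zero]
  have hlapv0 : lapTY n v 0 0 = deriv (deriv ψ) 0 := by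
    rw [lapTY, ← hpT2v]
    have : ∑ j : Fin n, partialY n j (partialY n j v) 0 0 = 0 :=
      Finset.sum_eq_zero fun j _ => partialYY_zero_of_boundary hv0 j
    rw [this, add_zero]
  -- continuity of the Laplacians along the t-axis at 0
  have hlapcont : ∀ (f : ℝ → EuclideanSpace ℝ (Fin n) → ℝ),
      ContDiffOn ℝ (⊤ : ℕ∞) (Function.uncurry f) U →
      ContinuousAt (fun t : ℝ => lapTY n f t 0) 0 := by
    intro f hf
    have h2 : ContinuousAt (fun t : ℝ =>
        ((t, (0 : EuclideanSpace ℝ (Fin n))) : ℝ × EuclideanSpace ℝ (Fin n))) 0 :=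
      continuousAt_id.prodMk continuousAt_const
    have hcomp : ContinuousAt (fun t : ℝ => LapF n (Function.uncurry f)
        (t, (0 : EuclideanSpace ℝ (Fin n)))) 0 :=
      ContinuousAt.comp (x := (0:ℝ)) (g := LapF n (Function.uncurry f))
        ((lapF_continuousOn hUopen hf).continuousAt (hUopen.mem_nhds h00U)) h2
    apply hcomp.congr
    filter_upwards [hIopen.mem_nhds h0I] with t ht
    exact (lapTY_eq hUopen hf (t, 0) ht).symm
  have hgu : ContinuousAt (fun t : ℝ => lapTY n u t 0) 0 := hlapcont u hu
  have hgv : ContinuousAt (fun t : ℝ => lapTY n v t 0) 0 := hlapcont v hv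
  -- a ≤ b via the main comparison hypothesis
  have hab : deriv (deriv φ) 0 ≤ deriv (deriv ψ) 0 := by
    by_contra hcon
    push_neg at hcon
    set r : ℝ := (deriv (deriv φ) 0 - deriv (deriv ψ) 0) / 2 with hrdef
    have hrpos : 0 < r := by simp only [hrdef]; linarith
    obtain ⟨δ₁, hδ₁pos, hδ₁⟩ := Metric.continuousAt_iff.1 hgu (r/2) (by linarith)
    obtain ⟨δ₂, hδ₂pos, hδ₂⟩ := Metric.continuousAt_iff.1 hgv (r/2) (by linarith)
    set ε : ℝ := min (δ₂/2) (4⁻¹ : ℝ) with hεdef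
    have hεpos : 0 < ε := lt_min (by linarith) (by norm_num)
    have hεlt1 : ε < 1 := lt_of_le_of_lt (min_le_right _ _) (by norm_num)
    have hεδ₂ : ε < δ₂ := lt_of_le_of_lt (min_le_left _ _) (by linarith)
    have hc : 0 < v ε 0 := hvpos (ε, 0) ⟨hεpos, hεlt1, hnorm0⟩
    have hφcont : ContinuousAt φ 0 := hφ.continuousOn.continuousAt (hIopen.mem_nhds h0I)
    obtain ⟨δ₃, hδ₃pos, hδ₃⟩ := Metric.continuousAt_iff.1 hφcont (v ε 0) hc
    set t₀ : ℝ := min (min δ₁ δ₃) ε / 2 with ht₀def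
    have ht₀pos : 0 < t₀ := by
      apply div_pos _ two_pos
      exact lt_min (lt_min hδ₁pos hδ₃pos) hεpos
    have ht₀ε : t₀ < ε := by
      have h1 : min (min δ₁ δ₃) ε ≤ ε := min_le_right _ _
      simp only [ht₀def]; linarith
    have ht₀δ₁ : t₀ < δ₁ := by
      have h1 : min (min δ₁ δ₃) ε ≤ δ₁ := (min_le_left _ _).trans (min_le_left _ _)
      simp only [ht₀def]; linarith
    have ht₀δ₃ : t₀ < δ₃ := by
      have h1 : min (min δ₁ δ₃) ε ≤ δ₃ := (min_le_left _ _).trans (min_le_right _ _)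
      simp only [ht₀def]; linarith
    have ht₀1 : t₀ < 1 := ht₀ε.trans hεlt1
    -- IVT to find s with v s 0 = u t₀ 0
    have hψcont : ContinuousOn ψ (Icc t₀ ε) := by
      apply hψ.continuousOn.mono
      intro s hs
      exact hIsub s (ht₀pos.trans_le hs.1) (lt_of_le_of_lt hs.2 hεlt1)
    have hmemIcc : u t₀ 0 ∈ Icc (ψ t₀) (ψ ε) := by
      constructor
      · exact huv (t₀, 0) (hclmem t₀ ht₀pos.le ht₀1)
      · have h1 : dist t₀ 0 < δ₃ := by
          rw [Real.dist_eq, sub_zero, abs_of_pos ht₀pos]; exact ht₀δ₃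
        have h2 := hδ₃ h1
        rw [Real.dist_eq, hφ0, sub_zero] at h2
        have h3 : φ t₀ ≤ |φ t₀| := le_abs_self _
        have : ψ ε = v ε 0 := rfl
        rw [this]
        calc u t₀ 0 = φ t₀ := rfl
          _ ≤ |φ t₀| := h3
          _ ≤ v ε 0 := h2.le
    obtain ⟨s, hsmem, hψs⟩ := intermediate_value_Icc ht₀ε.le hψcont hmemIcc
    -- apply the main hypothesis
    have hmain' : lapTY n u t₀ 0 ≤ lapTY n v s 0 :=
      hmain t₀ s 0 ht₀pos hsmem.1 (lt_of_le_of_lt hsmem.2 hεlt1) hnorm0 hψs.symm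
    -- continuity bounds
    have hb1 : |lapTY n u t₀ 0 - lapTY n u 0 0| < r/2 := by
      have h1 : dist t₀ 0 < δ₁ := by
        rw [Real.dist_eq, sub_zero, abs_of_pos ht₀pos]; exact ht₀δ₁
      have := hδ₁ h1
      rwa [Real.dist_eq] at this
    have hb2 : |lapTY n v s 0 - lapTY n v 0 0| < r/2 := by
      have h1 : dist s 0 < δ₂ := by
        rw [Real.dist_eq, sub_zero, abs_of_nonneg (ht₀pos.le.trans hsmem.1)]
        exact lt_of_le_of_lt hsmem.2 hεδ₂
      have := hδ₂ h1
      rwa [Real.dist_eq] at this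
    have hb1' := abs_lt.1 hb1
    have hb2' := abs_lt.1 hb2
    rw [hlapu0] at hb1'
    rw [hlapv0] at hb2'
    have : deriv (deriv φ) 0 ≤ deriv (deriv ψ) 0 + r := by linarith [hb1'.1, hb2'.2]
    simp only [hrdef] at this
    linarith
  -- combine
  have heq : deriv (deriv ψ) 0 = deriv (deriv φ) 0 := le_antisymm hba hab
  have ha_ne : partialT n u 2 0 0 ≠ 0 := hk.1.2
  have hb_ne : partialT n v 2 0 0 ≠ 0 := by
    rw [hpT2v, heq, ← hpT2u]; exact ha_ne
  refine ⟨⟨⟨one_le_two, hb_ne⟩, ?_⟩, by rw [hpT2v, heq, ← hpT2u]⟩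
  intro i hi
  by_contra hlt
  push_neg at hlt
  interval_cases i
  · exact absurd hi.1 (by norm_num)
  · have : partialT n v 1 0 0 = deriv ψ 0 := by
      simp [partialT, iteratedDeriv_one, hψdef]
    exact hi.2 (this.trans hdψ0)
end

section
/- Let b > 0 and let u ≥ v be positive functions on (0,b), with u ∈ C³((0,b)) ∩ C¹([0,b]), v ∈ C²((0,b)) ∩ C¹([0,b]), u(0) = u'(0) = 0, u' > 0 on (0,b), and the main condition: whenever u(t) = v(s) with 0 < t ≤ s < b, then u''(t) ≤ v''(s). If in addition v' ≥ 0 on (0,b), then u ≡ v on [0,b]. -/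
open Set

open Topology Filter

/-- Step A of the Appendix proof of Theorem 1.1. -/
theorem hopf_stepA_one_dimensional
(b : ℝ) (hb : 0 < b) (u v : ℝ → ℝ)
    (huv : ∀ x ∈ Icc (0:ℝ) b, v x ≤ u x)
    (hupos : ∀ x ∈ Ioo (0:ℝ) b, 0 < u x)
    (hvpos : ∀ x ∈ Ioo (0:ℝ) b, 0 < v x)
    (hu3 : ContDiffOn ℝ 3 u (Ioo 0 b))
    (hu1 : ContDiffOn ℝ 1 u (Icc 0 b))
    (hv2 : ContDiffOn ℝ 2 v (Ioo 0 b))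
    (hv1 : ContDiffOn ℝ 1 v (Icc 0 b))
    (hu0 : u 0 = 0)
    (hu'0 : derivWithin u (Icc 0 b) 0 = 0)
    (hmain : ∀ t s : ℝ, 0 < t → t ≤ s → s < b → u t = v s →
      deriv (deriv u) t ≤ deriv (deriv v) s)
    (hu' : ∀ x ∈ Ioo (0:ℝ) b, 0 < deriv u x)
    (hv' : ∀ x ∈ Ioo (0:ℝ) b, 0 ≤ deriv v x) :
    ∀ x ∈ Icc (0:ℝ) b, u x = v x := by
  have hb0 : (0:ℝ) ≤ b := hb.le
  have hcu : ContinuousOn u (Icc 0 b) := hu1.continuousOn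
  have hcv : ContinuousOn v (Icc 0 b) := hv1.continuousOn
  have hmono : StrictMonoOn u (Icc 0 b) := by
    apply strictMonoOn_of_deriv_pos (convex_Icc 0 b) hcu
    intro x hx
    rw [interior_Icc] at hx
    exact hu' x hx
  have h0mem : (0:ℝ) ∈ Icc (0:ℝ) b := left_mem_Icc.2 hb0
  have hbmem : b ∈ Icc (0:ℝ) b := right_mem_Icc.2 hb0
  have hub : 0 < u b := by
    have := hmono h0mem hbmem hb
    rwa [hu0] at this
  have hIccIoo : Ioo (0:ℝ) b ⊆ Icc 0 b := Ioo_subset_Icc_self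
  -- u nonneg etc on Icc
  have humem : ∀ x ∈ Icc (0:ℝ) b, u x ∈ Icc (0:ℝ) (u b) := by
    intro x hx
    constructor
    · have := hmono.monotoneOn h0mem hx hx.1
      rwa [hu0] at this
    · exact hmono.monotoneOn hx hbmem hx.2
  -- the inverse function
  set g : ℝ → ℝ := Function.invFunOn u (Icc 0 b) with hg_def
  have hsurj : ∀ y ∈ Icc (0:ℝ) (u b), ∃ a ∈ Icc (0:ℝ) b, u a = y := by
    intro y hy
    have h := intermediate_value_Icc hb0 hcu
    rw [hu0] at h
    obtain ⟨a, ha, hay⟩ := h hy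
    exact ⟨a, ha, hay⟩
  have hgu : ∀ y ∈ Icc (0:ℝ) (u b), u (g y) = y := fun y hy =>
    Function.invFunOn_eq (hsurj y hy)
  have hgmem : ∀ y ∈ Icc (0:ℝ) (u b), g y ∈ Icc (0:ℝ) b := fun y hy =>
    Function.invFunOn_mem (hsurj y hy)
  have hgut : ∀ t ∈ Icc (0:ℝ) b, g (u t) = t := by
    intro t ht
    have h1 : u t ∈ Icc (0:ℝ) (u b) := humem t ht
    exact hmono.injOn (hgmem _ h1) ht (hgu _ h1)
  -- basic derivative facts
  have hu_hasD : ∀ x ∈ Ioo (0:ℝ) b, HasDerivAt u (deriv u x) x := by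
    intro x hx
    exact (((hu3.differentiableOn (by norm_num)).differentiableAt
      (isOpen_Ioo.mem_nhds hx))).hasDerivAt
  have hv_hasD : ∀ x ∈ Ioo (0:ℝ) b, HasDerivAt v (deriv v x) x := by
    intro x hx
    exact (((hv2.differentiableOn (by norm_num)).differentiableAt
      (isOpen_Ioo.mem_nhds hx))).hasDerivAt
  have hdu2 : ContDiffOn ℝ 2 (deriv u) (Ioo 0 b) :=
    hu3.deriv_of_isOpen isOpen_Ioo (by norm_num)
  have hdv1 : ContDiffOn ℝ 1 (deriv v) (Ioo 0 b) :=
    hv2.deriv_of_isOpen isOpen_Ioo (by norm_num)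
  have hu''_hasD : ∀ x ∈ Ioo (0:ℝ) b, HasDerivAt (deriv u) (deriv (deriv u) x) x := by
    intro x hx
    exact (((hdu2.differentiableOn (by norm_num)).differentiableAt
      (isOpen_Ioo.mem_nhds hx))).hasDerivAt
  have hv''_hasD : ∀ x ∈ Ioo (0:ℝ) b, HasDerivAt (deriv v) (deriv (deriv v) x) x := by
    intro x hx
    exact (((hdv1.differentiableOn (by norm_num)).differentiableAt
      (isOpen_Ioo.mem_nhds hx))).hasDerivAt
  -- T
  set T : ℝ → ℝ := fun s => g (v s) with hT_def
  have hvs_mem : ∀ s ∈ Ioo (0:ℝ) b, v s ∈ Ioo (0:ℝ) (u b) := by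
    intro s hs
    refine ⟨hvpos s hs, lt_of_le_of_lt (huv s (hIccIoo hs)) ?_⟩
    exact hmono (hIccIoo hs) hbmem hs.2
  have hTeq : ∀ s ∈ Ioo (0:ℝ) b, u (T s) = v s := fun s hs =>
    hgu _ (Ioo_subset_Icc_self (hvs_mem s hs))
  have hTIcc : ∀ s ∈ Ioo (0:ℝ) b, T s ∈ Icc (0:ℝ) b := fun s hs =>
    hgmem _ (Ioo_subset_Icc_self (hvs_mem s hs))
  have hTpos : ∀ s ∈ Ioo (0:ℝ) b, 0 < T s := by
    intro s hs
    rcases lt_or_eq_of_le (hTIcc s hs).1 with h | h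
    · exact h
    · exfalso
      have := hTeq s hs
      rw [← h, hu0] at this
      exact absurd this.symm (ne_of_gt (hvpos s hs))
  have hTle : ∀ s ∈ Ioo (0:ℝ) b, T s ≤ s := by
    intro s hs
    have h1 : u (T s) ≤ u s := by rw [hTeq s hs]; exact huv s (hIccIoo hs)
    exact (hmono.le_iff_le (hTIcc s hs) (hIccIoo hs)).1 h1
  have hTIoo : ∀ s ∈ Ioo (0:ℝ) b, T s ∈ Ioo (0:ℝ) b := fun s hs =>
    ⟨hTpos s hs, lt_of_le_of_lt (hTle s hs) hs.2⟩
  -- continuity and differentiability of g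
  have hgmono : MonotoneOn g (Ioo (0:ℝ) (u b)) := by
    intro y1 h1 y2 h2 h12
    apply (hmono.le_iff_le (hgmem _ (Ioo_subset_Icc_self h1))
      (hgmem _ (Ioo_subset_Icc_self h2))).1
    rw [hgu _ (Ioo_subset_Icc_self h1), hgu _ (Ioo_subset_Icc_self h2)]
    exact h12
  have hgIoo : ∀ y ∈ Ioo (0:ℝ) (u b), g y ∈ Ioo (0:ℝ) b := by
    intro y hy
    have h1 := hgmem _ (Ioo_subset_Icc_self hy)
    have h2 := hgu _ (Ioo_subset_Icc_self hy)
    constructor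
    · rcases lt_or_eq_of_le h1.1 with h | h
      · exact h
      · exfalso; rw [← h, hu0] at h2; exact absurd h2.symm (ne_of_gt hy.1)
    · rcases lt_or_eq_of_le h1.2 with h | h
      · exact h
      · exfalso; rw [h] at h2; exact absurd h2 (ne_of_gt hy.2)
  have himg : Ioo (0:ℝ) b ⊆ g '' (Ioo (0:ℝ) (u b)) := by
    intro t ht
    refine ⟨u t, ?_, hgut t (hIccIoo ht)⟩
    constructor
    · have := hmono h0mem (hIccIoo ht) ht.1; rwa [hu0] at this
    · exact hmono (hIccIoo ht) hbmem ht.2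
  have hgcont : ∀ a ∈ Ioo (0:ℝ) (u b), ContinuousAt g a := by
    intro a ha
    exact continuousAt_of_monotoneOn_of_image_mem_nhds hgmono (Ioo_mem_nhds ha.1 ha.2)
      (Filter.mem_of_superset (Ioo_mem_nhds (hgIoo a ha).1 (hgIoo a ha).2) himg)
  have hgD : ∀ a ∈ Ioo (0:ℝ) (u b), HasDerivAt g (deriv u (g a))⁻¹ a := by
    intro a ha
    refine HasDerivAt.of_local_left_inverse (hgcont a ha)
      (hu_hasD (g a) (hgIoo a ha)) (ne_of_gt (hu' _ (hgIoo a ha))) ?_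
    filter_upwards [Ioo_mem_nhds ha.1 ha.2] with y hy
    exact hgu y (Ioo_subset_Icc_self hy)
  have hTD : ∀ s ∈ Ioo (0:ℝ) b, HasDerivAt T ((deriv u (T s))⁻¹ * deriv v s) s := by
    intro s hs
    exact (hgD (v s) (hvs_mem s hs)).comp s (hv_hasD s hs)
  -- the function E
  set E : ℝ → ℝ := fun s => (deriv u (T s))^2 - (deriv v s)^2 with hE_def
  have hED : ∀ s ∈ Ioo (0:ℝ) b, HasDerivAt E
      (2 * deriv v s * (deriv (deriv u) (T s) - deriv (deriv v) s)) s := by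
    intro s hs
    have h1 : HasDerivAt (fun s => deriv u (T s))
        (deriv (deriv u) (T s) * ((deriv u (T s))⁻¹ * deriv v s)) s :=
      (hu''_hasD (T s) (hTIoo s hs)).comp s (hTD s hs)
    have h2 := h1.pow 2
    have h3 := (hv''_hasD s hs).pow 2
    have h4 := h2.sub h3
    convert h4 using 1
    case e'_9 =>
      have hne : deriv u (T s) ≠ 0 := ne_of_gt (hu' _ (hTIoo s hs))
      have hinv : deriv u (T s) * (deriv u (T s))⁻¹ = 1 := mul_inv_cancel₀ hne
      rw [show (2:ℕ) - 1 = 1 from rfl, pow_one, pow_one]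
      linear_combination (-2 * deriv v s * deriv (deriv u) (T s)) * hinv
    all_goals rfl
  have hEanti : AntitoneOn E (Ioo 0 b) := by
    apply antitoneOn_of_deriv_nonpos (convex_Ioo 0 b)
    · intro x hx; exact (hED x hx).continuousAt.continuousWithinAt
    · intro x hx
      rw [interior_Ioo] at hx
      exact (hED x hx).differentiableAt.differentiableWithinAt
    · intro x hx
      rw [interior_Ioo] at hx
      rw [(hED x hx).deriv]
      have hle := hmain (T x) x (hTpos x hx) (hTle x hx) hx.2 (hTeq x hx)
      have hv'x := hv' x hx
      nlinarith
  -- derivWithin = deriv on the interior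
  have hderiv_eq : ∀ x ∈ Ioo (0:ℝ) b, derivWithin u (Icc 0 b) x = deriv u x := by
    intro x hx
    exact derivWithin_of_mem_nhds (Icc_mem_nhds hx.1 hx.2)
  -- E ≤ 0
  have hU'cont : ContinuousWithinAt (derivWithin u (Icc 0 b)) (Icc 0 b) 0 :=
    (hu1.continuousOn_derivWithin (uniqueDiffOn_Icc hb) le_rfl) 0 h0mem
  have hEle : ∀ s ∈ Ioo (0:ℝ) b, E s ≤ 0 := by
    intro s hs
    have key : ∀ ε > (0:ℝ), E s ≤ 0 + ε := by
      intro ε hε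
      set c := min 1 ε with hc_def
      have hc : 0 < c := lt_min one_pos hε
      have := Metric.continuousWithinAt_iff.1 hU'cont c hc
      obtain ⟨δ, hδ, hδ'⟩ := this
      set s' := min s (δ/2) with hs'_def
      have hs'pos : 0 < s' := lt_min hs.1 (by linarith)
      have hs'le : s' ≤ s := min_le_left _ _
      have hs'mem : s' ∈ Ioo (0:ℝ) b := ⟨hs'pos, lt_of_le_of_lt hs'le hs.2⟩
      have h1 : E s ≤ E s' := hEanti hs'mem hs hs'le
      have hT' : T s' ∈ Ioo (0:ℝ) b := hTIoo s' hs'mem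
      have hTd : dist (T s') 0 < δ := by
        rw [Real.dist_eq, sub_zero, abs_of_pos (hTpos s' hs'mem)]
        have := hTle s' hs'mem
        have : T s' ≤ δ/2 := le_trans this (min_le_right _ _)
        linarith
      have h2 := hδ' (hIccIoo hT') hTd
      rw [hu'0, Real.dist_eq, sub_zero] at h2
      rw [hderiv_eq _ hT'] at h2
      have hc1 : c ≤ 1 := min_le_left _ _
      have hc2 : c ≤ ε := min_le_right _ _
      have habs : |deriv u (T s')| < c := h2
      have hsq : (deriv u (T s'))^2 ≤ ε := by
        have := abs_nonneg (deriv u (T s'))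
        nlinarith [sq_abs (deriv u (T s'))]
      have h3 : E s' ≤ (deriv u (T s'))^2 := by
        simp only [hE_def]
        nlinarith [sq_nonneg (deriv v s')]
      linarith
    linarith [le_of_forall_pos_le_add key]
  have hu'le : ∀ s ∈ Ioo (0:ℝ) b, deriv u (T s) ≤ deriv v s := by
    intro s hs
    have h1 := hEle s hs
    have h2 := hu' _ (hTIoo s hs)
    have h3 := hv' s hs
    simp only [hE_def] at h1
    nlinarith
  -- the function G
  set G : ℝ → ℝ := fun s => s - T s with hG_def
  have hGD : ∀ s ∈ Ioo (0:ℝ) b, HasDerivAt G (1 - (deriv u (T s))⁻¹ * deriv v s) s :=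
    fun s hs => (hasDerivAt_id s).sub (hTD s hs)
  have hGanti : AntitoneOn G (Ioo 0 b) := by
    apply antitoneOn_of_deriv_nonpos (convex_Ioo 0 b)
    · intro x hx; exact (hGD x hx).continuousAt.continuousWithinAt
    · intro x hx
      rw [interior_Ioo] at hx
      exact (hGD x hx).differentiableAt.differentiableWithinAt
    · intro x hx
      rw [interior_Ioo] at hx
      rw [(hGD x hx).deriv]
      have h1 := hu' _ (hTIoo x hx)
      have h2 := hu'le x hx
      have h3 : 1 ≤ (deriv u (T x))⁻¹ * deriv v x := by
        calc (1:ℝ) = (deriv u (T x))⁻¹ * deriv u (T x) := (inv_mul_cancel₀ (ne_of_gt h1)).symm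
        _ ≤ (deriv u (T x))⁻¹ * deriv v x :=
            mul_le_mul_of_nonneg_left (hu'le x hx) (le_of_lt (inv_pos.2 h1))
      linarith
  have hGzero : ∀ s ∈ Ioo (0:ℝ) b, T s = s := by
    intro s hs
    have h0 : 0 ≤ G s := by simp only [hG_def]; linarith [hTle s hs]
    have key : ∀ ε > (0:ℝ), G s ≤ 0 + ε := by
      intro ε hε
      set s' := min s ε with hs'_def
      have hs'pos : 0 < s' := lt_min hs.1 hε
      have hs'le : s' ≤ s := min_le_left _ _
      have hs'mem : s' ∈ Ioo (0:ℝ) b := ⟨hs'pos, lt_of_le_of_lt hs'le hs.2⟩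
      have h1 : G s ≤ G s' := hGanti hs'mem hs hs'le
      have h2 : G s' ≤ s' := by
        simp only [hG_def]
        linarith [(hTpos s' hs'mem)]
      have h3 : s' ≤ ε := min_le_right _ _
      linarith
    have := le_of_forall_pos_le_add key
    have hGs : G s = 0 := le_antisymm (by linarith) h0
    simp only [hG_def] at hGs
    linarith
  have heq : ∀ s ∈ Ioo (0:ℝ) b, u s = v s := by
    intro s hs
    have := hTeq s hs
    rwa [hGzero s hs] at this
  -- endpoints
  have hne0 : (𝓝[Ioo (0:ℝ) b] (0:ℝ)).NeBot := by
    apply mem_closure_iff_nhdsWithin_neBot.1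
    rw [closure_Ioo hb.ne]
    exact h0mem
  have hneb : (𝓝[Ioo (0:ℝ) b] b).NeBot := by
    apply mem_closure_iff_nhdsWithin_neBot.1
    rw [closure_Ioo hb.ne]
    exact hbmem
  have hend : ∀ x₀ ∈ Icc (0:ℝ) b, (𝓝[Ioo (0:ℝ) b] x₀).NeBot → u x₀ = v x₀ := by
    intro x₀ hx₀ hnb
    have hcw : ContinuousWithinAt (fun x => u x - v x) (Icc 0 b) x₀ :=
      ((hcu x₀ hx₀).sub (hcv x₀ hx₀))
    have h1 : Filter.Tendsto (fun x => u x - v x) (𝓝[Ioo (0:ℝ) b] x₀) (𝓝 (u x₀ - v x₀)) :=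
      hcw.tendsto.mono_left (nhdsWithin_mono _ hIccIoo)
    have h2 : Filter.Tendsto (fun x => u x - v x) (𝓝[Ioo (0:ℝ) b] x₀) (𝓝 0) := by
      apply Filter.Tendsto.congr' _ tendsto_const_nhds
      filter_upwards [self_mem_nhdsWithin] with x hx
      rw [heq x hx]; ring
    have := tendsto_nhds_unique h1 h2
    linarith
  intro x hx
  rcases eq_or_lt_of_le hx.1 with h0 | h0
  · exact hend x hx (h0 ▸ hne0)
  rcases eq_or_lt_of_le hx.2 with hb' | hb'
  · exact hend x hx (hb' ▸ hneb)
  exact heq x ⟨h0, hb'⟩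
end

section
/- Let b > 0 and let u ≥ v be positive functions on (0,b), with u ∈ C³((0,b)) ∩ C¹([0,b]), v ∈ C²((0,b)) ∩ C¹([0,b]), u(0) = u'(0) = 0, u' > 0 on (0,b), and the main condition: whenever u(t) = v(s) with 0 < t ≤ s < b, then u''(t) ≤ v''(s). If v(s₀) = u(s₀) for some s₀ ∈ (0,b), then v ≡ u on [0,b]. -/
open Set

lemma aux_anti {A B : ℝ} {g g' : ℝ → ℝ}
    (h : ∀ s ∈ Icc A B, HasDerivAt g (g' s) s)
    (h0 : ∀ s ∈ Icc A B, g' s ≤ 0) : AntitoneOn g (Icc A B) := by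
  apply antitoneOn_of_deriv_nonpos (convex_Icc A B)
    (fun x hx => (h x hx).continuousAt.continuousWithinAt)
  · intro x hx
    rw [interior_Icc] at hx
    exact (h x (Ioo_subset_Icc_self hx)).differentiableAt.differentiableWithinAt
  · intro x hx
    rw [interior_Icc] at hx
    rw [(h x (Ioo_subset_Icc_self hx)).deriv]
    exact h0 x (Ioo_subset_Icc_self hx)

lemma aux_mono {A B : ℝ} {g g' : ℝ → ℝ}
    (h : ∀ s ∈ Icc A B, HasDerivAt g (g' s) s)
    (h0 : ∀ s ∈ Icc A B, 0 ≤ g' s) : MonotoneOn g (Icc A B) := by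
  apply monotoneOn_of_deriv_nonneg (convex_Icc A B)
    (fun x hx => (h x hx).continuousAt.continuousWithinAt)
  · intro x hx
    rw [interior_Icc] at hx
    exact (h x (Ioo_subset_Icc_self hx)).differentiableAt.differentiableWithinAt
  · intro x hx
    rw [interior_Icc] at hx
    rw [(h x (Ioo_subset_Icc_self hx)).deriv]
    exact h0 x (Ioo_subset_Icc_self hx)

set_option maxHeartbeats 2000000 in
/-- Lemma A.1 of the Appendix: if v touches u at an interior point then v ≡ u. -/
theorem hopf_lemmaA1_one_dimensional
(b : ℝ) (hb : 0 < b) (u v : ℝ → ℝ)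
    (huv : ∀ x ∈ Icc (0:ℝ) b, v x ≤ u x)
    (hupos : ∀ x ∈ Ioo (0:ℝ) b, 0 < u x)
    (hvpos : ∀ x ∈ Ioo (0:ℝ) b, 0 < v x)
    (hu3 : ContDiffOn ℝ 3 u (Ioo 0 b))
    (hu1 : ContDiffOn ℝ 1 u (Icc 0 b))
    (hv2 : ContDiffOn ℝ 2 v (Ioo 0 b))
    (hv1 : ContDiffOn ℝ 1 v (Icc 0 b))
    (hu0 : u 0 = 0)
    (hu'0 : derivWithin u (Icc 0 b) 0 = 0)
    (hmain : ∀ t s : ℝ, 0 < t → t ≤ s → s < b → u t = v s →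
      deriv (deriv u) t ≤ deriv (deriv v) s)
    (hu' : ∀ x ∈ Ioo (0:ℝ) b, 0 < deriv u x)
    (s₀ : ℝ) (hs₀ : s₀ ∈ Ioo (0:ℝ) b) (hvu : v s₀ = u s₀) :
    ∀ x ∈ Icc (0:ℝ) b, v x = u x := by
  have hO : IsOpen (Ioo (0:ℝ) b) := isOpen_Ioo
  -- smoothness of derivatives on the open interval
  have hu3' : ContDiffOn ℝ 2 (deriv u) (Ioo 0 b) := hu3.deriv_of_isOpen hO (by norm_num)
  have hu3'' : ContDiffOn ℝ 1 (deriv (deriv u)) (Ioo 0 b) := hu3'.deriv_of_isOpen hO (by norm_num)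
  have hu3''' : ContinuousOn (deriv (deriv (deriv u))) (Ioo 0 b) :=
    (hu3''.deriv_of_isOpen (m := 0) hO (by norm_num)).continuousOn
  have hv2' : ContDiffOn ℝ 1 (deriv v) (Ioo 0 b) := hv2.deriv_of_isOpen hO (by norm_num)
  -- pointwise derivatives
  have du : ∀ s ∈ Ioo (0:ℝ) b, HasDerivAt u (deriv u s) s := fun s hs =>
    ((hu3.differentiableOn (by norm_num) s hs).differentiableAt (hO.mem_nhds hs)).hasDerivAt
  have dv : ∀ s ∈ Ioo (0:ℝ) b, HasDerivAt v (deriv v s) s := fun s hs =>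
    ((hv2.differentiableOn (by norm_num) s hs).differentiableAt (hO.mem_nhds hs)).hasDerivAt
  have ddu : ∀ s ∈ Ioo (0:ℝ) b, HasDerivAt (deriv u) (deriv (deriv u) s) s := fun s hs =>
    ((hu3'.differentiableOn (by norm_num) s hs).differentiableAt (hO.mem_nhds hs)).hasDerivAt
  have ddv : ∀ s ∈ Ioo (0:ℝ) b, HasDerivAt (deriv v) (deriv (deriv v) s) s := fun s hs =>
    ((hv2'.differentiableOn (by norm_num) s hs).differentiableAt (hO.mem_nhds hs)).hasDerivAt
  set w : ℝ → ℝ := fun x => u x - v x with hw_def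
  set w1 : ℝ → ℝ := fun x => deriv u x - deriv v x with hw1_def
  set w2 : ℝ → ℝ := fun x => deriv (deriv u) x - deriv (deriv v) x with hw2_def
  have hw : ∀ s ∈ Ioo (0:ℝ) b, HasDerivAt w (w1 s) s := fun s hs => (du s hs).sub (dv s hs)
  have hw1 : ∀ s ∈ Ioo (0:ℝ) b, HasDerivAt w1 (w2 s) s := fun s hs => (ddu s hs).sub (ddv s hs)
  have hwnn : ∀ x ∈ Icc (0:ℝ) b, 0 ≤ w x := fun x hx => sub_nonneg.2 (huv x hx)
  have hws₀ : w s₀ = 0 := by simp [hw_def, hvu]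
  -- w has a local min at s₀, so w1 s₀ = 0
  have hw1s₀ : w1 s₀ = 0 := by
    have hmin : IsLocalMin w s₀ := by
      filter_upwards [hO.mem_nhds hs₀] with y hy
      rw [hws₀]; exact hwnn y (Ioo_subset_Icc_self hy)
    rw [← (hw s₀ hs₀).deriv]
    exact hmin.deriv_eq_zero
  -- main interior claim
  have key : ∀ x ∈ Ioo (0:ℝ) b, w x = 0 := by
    intro x hx
    set p : ℝ := min x s₀ / 2 with hp_def
    set q : ℝ := (max x s₀ + b) / 2 with hq_def
    have hp0 : 0 < p := by
      have := hx.1; have := hs₀.1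
      simp only [hp_def, lt_min_iff]; positivity
    have hpx : p < x := by
      have h1 : min x s₀ ≤ x := min_le_left _ _
      have : 0 < min x s₀ := lt_min hx.1 hs₀.1
      simp only [hp_def]; linarith
    have hps : p < s₀ := by
      have h1 : min x s₀ ≤ s₀ := min_le_right _ _
      have : 0 < min x s₀ := lt_min hx.1 hs₀.1
      simp only [hp_def]; linarith
    have hxq : x < q := by
      have h1 : x ≤ max x s₀ := le_max_left _ _
      have h2 : max x s₀ < b := max_lt hx.2 hs₀.2
      simp only [hq_def]; linarith
    have hsq : s₀ < q := by
      have h1 : s₀ ≤ max x s₀ := le_max_right _ _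
      have h2 : max x s₀ < b := max_lt hx.2 hs₀.2
      simp only [hq_def]; linarith
    have hqb : q < b := by
      have h2 : max x s₀ < b := max_lt hx.2 hs₀.2
      simp only [hq_def]; linarith
    have hpq : p < q := hpx.trans hxq
    have hpqO : Icc p q ⊆ Ioo (0:ℝ) b := fun y hy => ⟨hp0.trans_le hy.1, hy.2.trans_lt hqb⟩
    -- min of v on [p,q]
    obtain ⟨z, hz, hzmin⟩ := isCompact_Icc.exists_isMinOn (nonempty_Icc.2 hpq.le)
      ((hv1.continuousOn).mono ((Icc_subset_Icc_iff hpq.le).2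
        ⟨hp0.le, hqb.le⟩))
    have hminv : 0 < v z := hvpos z (hpqO hz)
    -- choose c' ∈ (0,p) with u c' < v z
    obtain ⟨c, hc, hcu⟩ : ∃ c, c ∈ Ioo (0:ℝ) p ∧ u c < v z := by
      haveI : (nhdsWithin (0:ℝ) (Ioo 0 p)).NeBot := by
        apply mem_closure_iff_nhdsWithin_neBot.mp
        rw [closure_Ioo hp0.ne]
        exact ⟨le_rfl, hp0.le⟩
      have hcw : ContinuousWithinAt u (Ioo 0 p) 0 :=
        (hu1.continuousOn 0 ⟨le_rfl, hb.le⟩).mono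
          (fun y hy => ⟨hy.1.le, hy.2.le.trans (hpx.le.trans hx.2.le)⟩)
      have htd : Filter.Tendsto u (nhdsWithin (0:ℝ) (Ioo 0 p)) (nhds 0) := by
        have h := hcw; rw [ContinuousWithinAt, hu0] at h; exact h
      have hev : ∀ᶠ y in nhdsWithin (0:ℝ) (Ioo 0 p), u y < v z :=
        htd.eventually (eventually_lt_nhds hminv)
      exact (hev.and (eventually_mem_nhdsWithin)).exists.imp (fun c hc => ⟨hc.2, hc.1⟩)
    have hcq : Icc c q ⊆ Ioo (0:ℝ) b := fun y hy =>
      ⟨hc.1.trans_le hy.1, hy.2.trans_lt hqb⟩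
    -- min of deriv u on [c,q]
    obtain ⟨m, hm0, hzmmin⟩ : ∃ m : ℝ, 0 < m ∧ ∀ y ∈ Icc c q, m ≤ deriv u y := by
      obtain ⟨zm, hzm, hmin⟩ := isCompact_Icc.exists_isMinOn
        (nonempty_Icc.2 (hc.2.le.trans hpq.le)) ((hu3'.continuousOn).mono hcq)
      exact ⟨deriv u zm, hu' zm (hcq hzm), fun y hy => hmin hy⟩
    -- max of |u'''| on [c,q]
    obtain ⟨M, hM0, hzMmax⟩ : ∃ M : ℝ, 0 ≤ M ∧
        ∀ y ∈ Icc c q, deriv (deriv (deriv u)) y ≤ M := by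
      obtain ⟨zM, hzM, hmax⟩ := isCompact_Icc.exists_isMaxOn
        (nonempty_Icc.2 (hc.2.le.trans hpq.le)) ((hu3'''.mono hcq).abs)
      exact ⟨|deriv (deriv (deriv u)) zM|, abs_nonneg _,
        fun y hy => (le_abs_self _).trans (hmax hy)⟩
    obtain ⟨C, hC0, hCge⟩ : ∃ C : ℝ, 0 < C ∧ M / m ≤ C := ⟨M / m + 1, by positivity, by linarith⟩
    obtain ⟨l, hl0, hl2⟩ : ∃ l : ℝ, 0 ≤ l ∧ l * l = C :=
      ⟨Real.sqrt C, Real.sqrt_nonneg _, Real.mul_self_sqrt hC0.le⟩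
    -- key differential inequality
    have hkey : ∀ s ∈ Icc p q, w2 s ≤ C * w s := by
      intro s hs
      have hsO : s ∈ Ioo (0:ℝ) b := hpqO hs
      have hvs : v z ≤ v s := hzmin hs
      have hucs : u c ≤ v s := (hcu.trans_le hvs).le
      have hcs : c ≤ s := hc.2.le.trans hs.1
      obtain ⟨t, ht, hut⟩ := intermediate_value_Icc hcs
        ((hu1.continuousOn).mono (Icc_subset_Icc (hc.1.le) (hsO.2.le)))
        ⟨hucs, huv s (Icc_subset_Icc (by positivity) hqb.le hs)⟩
      have ht0 : 0 < t := hc.1.trans_le ht.1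
      have h2 : deriv (deriv u) t ≤ deriv (deriv v) s :=
        hmain t s ht0 ht.2 hsO.2 hut
      have hwnns : 0 ≤ w s := hwnn s ⟨hsO.1.le, hsO.2.le⟩
      rcases eq_or_lt_of_le ht.2 with hts | hts
      · -- t = s : w s = 0 and w2 s ≤ 0
        have hws : w s = 0 := by simp [hw_def, ← hut, hts]
        have : w2 s ≤ 0 := by
          simp only [hw2_def]
          rw [← hts] at h2 ⊢
          linarith
        rw [hws]; linarith
      · -- t < s
        have hsubts : Icc t s ⊆ Icc c q := Icc_subset_Icc ht.1 hs.2
        -- MVT for u'' on [t,s]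
        obtain ⟨ξ, hξ, hξeq⟩ := exists_deriv_eq_slope (deriv (deriv u)) hts
          ((hu3''.continuousOn).mono ((hsubts.trans hcq) : Icc t s ⊆ Ioo 0 b))
          ((hu3''.differentiableOn (by norm_num)).mono
            ((Ioo_subset_Icc_self.trans hsubts).trans hcq))
        have hξM : deriv (deriv (deriv u)) ξ ≤ M :=
          hzMmax ξ (hsubts (Ioo_subset_Icc_self hξ))
        -- MVT for u on [t,s]
        obtain ⟨η, hη, hηeq⟩ := exists_deriv_eq_slope u hts
          ((hu1.continuousOn).mono ((hsubts.trans hcq).trans Ioo_subset_Icc_self))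
          ((hu3.differentiableOn (by norm_num)).mono
            ((Ioo_subset_Icc_self.trans hsubts).trans hcq))
        have hηm : m ≤ deriv u η := hzmmin η (hsubts (Ioo_subset_Icc_self hη))
        have hst : 0 < s - t := sub_pos.2 hts
        have e1 : deriv (deriv u) s - deriv (deriv u) t ≤ M * (s - t) := by
          have := hξeq
          have h3 : deriv (deriv u) s - deriv (deriv u) t
              = deriv (deriv (deriv u)) ξ * (s - t) := by
            field_simp at this ⊢; linarith
          rw [h3]
          exact mul_le_mul_of_nonneg_right hξM hst.le
        have e2 : m * (s - t) ≤ w s := by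
          have h3 : u s - u t = deriv u η * (s - t) := by
            field_simp at hηeq ⊢; linarith
          have h4 : w s = u s - u t := by simp [hw_def, hut]
          rw [h4, h3]
          exact mul_le_mul_of_nonneg_right hηm hst.le
        have e3 : w2 s ≤ deriv (deriv u) s - deriv (deriv u) t := by
          simp only [hw2_def]; linarith
        have h5 : M * (s - t) ≤ M / m * w s := by
          rw [div_mul_eq_mul_div, le_div_iff₀ hm0]
          nlinarith
        have h6 : M / m * w s ≤ C * w s := mul_le_mul_of_nonneg_right hCge hwnns
        exact le_trans (e3.trans e1) (h5.trans h6)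
    -- derivative of s ↦ exp(a*s)
    have hexp : ∀ (a s : ℝ), HasDerivAt (fun y => Real.exp (a*y)) (Real.exp (a*s) * a) s :=
      fun a s => by simpa using ((hasDerivAt_id s).const_mul a).exp
    -- the barrier argument
    rcases lt_trichotomy s₀ x with hsx | hsx | hsx
    · -- right side: s₀ < x
      have hIcc : Icc s₀ x ⊆ Icc p q := Icc_subset_Icc hps.le hxq.le
      have hIccO : Icc s₀ x ⊆ Ioo (0:ℝ) b := hIcc.trans hpqO
      -- step 1 : w1 s ≤ l * w s on [s₀, x]
      have step1 : ∀ s ∈ Icc s₀ x, w1 s ≤ l * w s := by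
        have hanti := aux_anti (g := fun s => Real.exp (l*s) * (w1 s - l * w s))
          (g' := fun s => Real.exp (l*s) * (w2 s - C * w s))
          (fun s hs => by
            have h := ((hexp l s).mul
              ((hw1 s (hIccO hs)).sub ((hw s (hIccO hs)).const_mul l)))
            refine h.congr_deriv ?_
            rw [← hl2]; simp only [Pi.sub_apply]; ring)
          (fun s hs => mul_nonpos_of_nonneg_of_nonpos (Real.exp_pos _).le
            (by have := hkey s (hIcc hs); linarith))
        intro s hs
        have h := hanti (left_mem_Icc.2 (hs.1.trans hs.2)) hs hs.1
        try dsimp only at h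
        rw [hw1s₀, hws₀] at h
        have hE := Real.exp_pos (l*s)
        have h2 : Real.exp (l*s) * (w1 s - l * w s) ≤ Real.exp (l*s) * 0 := by
          rw [mul_zero]
          calc Real.exp (l*s) * (w1 s - l * w s) ≤ Real.exp (l*s₀) * (0 - l * 0) := h
          _ ≤ 0 := by simp
        have := le_of_mul_le_mul_left h2 hE
        linarith
      -- step 2 : exp(-(l*s)) * w s antitone on [s₀, x]
      have step2 := aux_anti (g := fun s => Real.exp (-l*s) * w s)
        (g' := fun s => Real.exp (-l*s) * (w1 s - l * w s))
        (fun s hs => by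
          have h := (hexp (-l) s).mul (hw s (hIccO hs))
          refine h.congr_deriv ?_
          ring)
        (fun s hs => mul_nonpos_of_nonneg_of_nonpos (Real.exp_pos _).le
          (by have := step1 s hs; linarith))
      have h := step2 (left_mem_Icc.2 (hsx.le)) (right_mem_Icc.2 hsx.le) hsx.le
      try dsimp only at h
      rw [hws₀, mul_zero] at h
      have hE := Real.exp_pos (-l*x)
      have hwx : 0 ≤ w x := hwnn x ⟨hx.1.le, hx.2.le⟩
      have hle : w x ≤ 0 := by
        have h2 : Real.exp (-l*x) * w x ≤ Real.exp (-l*x) * 0 := by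
          rw [mul_zero]; exact h
        exact le_of_mul_le_mul_left h2 hE
      linarith
    · rw [← hsx]; exact hws₀
    · -- left side: x < s₀
      have hIcc : Icc x s₀ ⊆ Icc p q := Icc_subset_Icc hpx.le hsq.le
      have hIccO : Icc x s₀ ⊆ Ioo (0:ℝ) b := hIcc.trans hpqO
      -- step 1 : -(l * w s) ≤ w1 s on [x, s₀]
      have step1 : ∀ s ∈ Icc x s₀, -(l * w s) ≤ w1 s := by
        have hanti := aux_anti (g := fun s => Real.exp (-l*s) * (w1 s + l * w s))
          (g' := fun s => Real.exp (-l*s) * (w2 s - C * w s))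
          (fun s hs => by
            have h := ((hexp (-l) s).mul
              ((hw1 s (hIccO hs)).add ((hw s (hIccO hs)).const_mul l)))
            refine h.congr_deriv ?_
            rw [← hl2]; simp only [Pi.add_apply]; ring)
          (fun s hs => mul_nonpos_of_nonneg_of_nonpos (Real.exp_pos _).le
            (by have := hkey s (hIcc hs); linarith))
        intro s hs
        have h := hanti hs (right_mem_Icc.2 (hs.1.trans hs.2)) hs.2
        try dsimp only at h
        rw [hw1s₀, hws₀] at h
        have hE := Real.exp_pos (-l*s)
        have h2 : Real.exp (-l*s) * 0 ≤ Real.exp (-l*s) * (w1 s + l * w s) := by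
          rw [mul_zero]
          calc (0:ℝ) = Real.exp (-l*s₀) * (0 + l * 0) := by simp
          _ ≤ Real.exp (-l*s) * (w1 s + l * w s) := h
        have := le_of_mul_le_mul_left h2 hE
        linarith
      -- step 2 : exp(l*s) * w s monotone on [x, s₀]
      have step2 := aux_mono (g := fun s => Real.exp (l*s) * w s)
        (g' := fun s => Real.exp (l*s) * (w1 s + l * w s))
        (fun s hs => by
          have h := (hexp l s).mul (hw s (hIccO hs))
          refine h.congr_deriv ?_
          ring)
        (fun s hs => mul_nonneg (Real.exp_pos _).le
          (by have := step1 s hs; linarith))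
      have h := step2 (left_mem_Icc.2 (hsx.le)) (right_mem_Icc.2 hsx.le) hsx.le
      try dsimp only at h
      rw [hws₀, mul_zero] at h
      have hE := Real.exp_pos (l*x)
      have hwx : 0 ≤ w x := hwnn x ⟨hx.1.le, hx.2.le⟩
      have hle : w x ≤ 0 := by
        have h2 : Real.exp (l*x) * w x ≤ Real.exp (l*x) * 0 := by
          rw [mul_zero]; exact h
        exact le_of_mul_le_mul_left h2 hE
      linarith
  -- conclude on the closed interval
  intro x hx
  rcases eq_or_lt_of_le hx.1 with h0 | h0
  · -- x = 0
    haveI : (nhdsWithin (0:ℝ) (Ioo 0 b)).NeBot := by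
      apply mem_closure_iff_nhdsWithin_neBot.mp
      rw [closure_Ioo hb.ne]
      exact ⟨le_rfl, hb.le⟩
    have hvl : Filter.Tendsto v (nhdsWithin (0:ℝ) (Ioo 0 b)) (nhds (v 0)) :=
      (hv1.continuousOn 0 ⟨le_rfl, hb.le⟩).mono Ioo_subset_Icc_self
    have hul : Filter.Tendsto u (nhdsWithin (0:ℝ) (Ioo 0 b)) (nhds (u 0)) :=
      (hu1.continuousOn 0 ⟨le_rfl, hb.le⟩).mono Ioo_subset_Icc_self
    have heq : v =ᶠ[nhdsWithin (0:ℝ) (Ioo 0 b)] u := by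
      filter_upwards [eventually_mem_nhdsWithin] with y hy
      have := key y hy
      simp only [hw_def] at this
      linarith
    rw [← h0]
    exact tendsto_nhds_unique_of_eventuallyEq hvl hul heq
  rcases eq_or_lt_of_le hx.2 with hb' | hb'
  · -- x = b
    haveI : (nhdsWithin b (Ioo 0 b)).NeBot := by
      apply mem_closure_iff_nhdsWithin_neBot.mp
      rw [closure_Ioo hb.ne]
      exact ⟨hb.le, le_rfl⟩
    have hvl : Filter.Tendsto v (nhdsWithin b (Ioo 0 b)) (nhds (v b)) :=
      (hv1.continuousOn b ⟨hb.le, le_rfl⟩).mono Ioo_subset_Icc_self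
    have hul : Filter.Tendsto u (nhdsWithin b (Ioo 0 b)) (nhds (u b)) :=
      (hu1.continuousOn b ⟨hb.le, le_rfl⟩).mono Ioo_subset_Icc_self
    have heq : v =ᶠ[nhdsWithin b (Ioo 0 b)] u := by
      filter_upwards [eventually_mem_nhdsWithin] with y hy
      have := key y hy
      simp only [hw_def] at this
      linarith
    rw [hb']
    exact tendsto_nhds_unique_of_eventuallyEq hvl hul heq
  · have := key x ⟨h0, hb'⟩
    simp only [hw_def] at this
    linarith
end

section
/- Let b > 0 and let u ≥ v be positive functions on (0,b), with u ∈ C³((0,b)) ∩ C¹([0,b]), v ∈ C²((0,b)) ∩ C¹([0,b]), u(0) = u'(0) = 0, u' > 0 on (0,b), v' ≥ 0 on (0,b), and the main condition: whenever u(t) = v(s) with 0 < t ≤ s < b, then u''(t) ≤ v''(s). For each s ∈ (0,b), let t(s) ∈ (0,s] be the unique point with u(t(s)) = v(s) (which exists since u is strictly increasing with u(0) = 0 and 0 < v(s) ≤ u(s)). Then v'(s)² ≥ u'(t(s))² for all s ∈ (0,b). -/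
open Set

/-- The key inequality from (A.4) in Step A of the Appendix: v'(s)² ≥ u'(t(s))². -/
theorem hopf_A4_inequality_one_dimensional
(b : ℝ) (hb : 0 < b) (u v : ℝ → ℝ)
    (huv : ∀ x ∈ Icc (0:ℝ) b, v x ≤ u x)
    (hupos : ∀ x ∈ Ioo (0:ℝ) b, 0 < u x)
    (hvpos : ∀ x ∈ Ioo (0:ℝ) b, 0 < v x)
    (hu3 : ContDiffOn ℝ 3 u (Ioo 0 b))
    (hu1 : ContDiffOn ℝ 1 u (Icc 0 b))
    (hv2 : ContDiffOn ℝ 2 v (Ioo 0 b))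
    (hv1 : ContDiffOn ℝ 1 v (Icc 0 b))
    (hu0 : u 0 = 0)
    (hu'0 : derivWithin u (Icc 0 b) 0 = 0)
    (hmain : ∀ t s : ℝ, 0 < t → t ≤ s → s < b → u t = v s →
      deriv (deriv u) t ≤ deriv (deriv v) s)
    (hu' : ∀ x ∈ Ioo (0:ℝ) b, 0 < deriv u x)
    (hv' : ∀ x ∈ Ioo (0:ℝ) b, 0 ≤ deriv v x)
    (T : ℝ → ℝ)
    (hT : ∀ s ∈ Ioo (0:ℝ) b, (0 < T s ∧ T s ≤ s) ∧ u (T s) = v s) :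
    ∀ s ∈ Ioo (0:ℝ) b, (deriv u (T s)) ^ 2 ≤ (deriv v s) ^ 2 := by
  -- u is strictly monotone on [0,b]
  have hmono : StrictMonoOn u (Icc 0 b) :=
    strictMonoOn_of_deriv_pos (convex_Icc 0 b) hu1.continuousOn
      (fun x hx => hu' x (by rwa [interior_Icc] at hx))
  have hinj : InjOn u (Icc 0 b) := hmono.injOn
  set U : ℝ → ℝ := Function.invFunOn u (Icc 0 b) with hUdef
  have hUleft : ∀ x ∈ Icc (0:ℝ) b, U (u x) = x := fun x hx => hinj.leftInvOn_invFunOn hx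
  have hIVT : Ioo (u 0) (u b) ⊆ u '' Ioo 0 b := intermediate_value_Ioo hb.le hu1.continuousOn
  have hUeq : ∀ y ∈ Ioo (0:ℝ) (u b), U y ∈ Ioo 0 b ∧ u (U y) = y := by
    intro y hy
    obtain ⟨x, hx, hxy⟩ := hIVT (by rwa [hu0])
    have hx' : x ∈ Icc (0:ℝ) b := Ioo_subset_Icc_self hx
    have : U y = x := by rw [← hxy, hUleft x hx']
    rw [this]; exact ⟨hx, hxy⟩
  have hmemIoo : ∀ x ∈ Ioo (0:ℝ) b, u x ∈ Ioo (0:ℝ) (u b) := by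
    intro x hx
    constructor
    · rw [← hu0]
      exact hmono ⟨le_rfl, hb.le⟩ (Ioo_subset_Icc_self hx) hx.1
    · exact hmono (Ioo_subset_Icc_self hx) ⟨hb.le, le_rfl⟩ hx.2
  have hUimg : U '' Ioo 0 (u b) = Ioo 0 b := by
    apply subset_antisymm
    · rintro _ ⟨y, hy, rfl⟩; exact (hUeq y hy).1
    · intro x hx
      exact ⟨u x, hmemIoo x hx, hUleft x (Ioo_subset_Icc_self hx)⟩
  have hUmono : StrictMonoOn U (Ioo 0 (u b)) := by
    intro y1 h1 y2 h2 h12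
    obtain ⟨m1, e1⟩ := hUeq y1 h1
    obtain ⟨m2, e2⟩ := hUeq y2 h2
    have : u (U y1) < u (U y2) := by rw [e1, e2]; exact h12
    exact (hmono.lt_iff_lt (Ioo_subset_Icc_self m1) (Ioo_subset_Icc_self m2)).mp this
  have hUcont : ∀ y ∈ Ioo (0:ℝ) (u b), ContinuousAt U y := by
    intro y hy
    refine hUmono.continuousAt_of_image_mem_nhds (Ioo_mem_nhds hy.1 hy.2) ?_
    rw [hUimg]
    exact Ioo_mem_nhds (hUeq y hy).1.1 (hUeq y hy).1.2
  -- basic differentiability facts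
  have hud : ∀ x ∈ Ioo (0:ℝ) b, HasDerivAt u (deriv u x) x := by
    intro x hx
    exact ((hu3.differentiableOn (by norm_num)).differentiableAt
      (isOpen_Ioo.mem_nhds hx)).hasDerivAt
  have hvd : ∀ x ∈ Ioo (0:ℝ) b, HasDerivAt v (deriv v x) x := by
    intro x hx
    exact ((hv2.differentiableOn (by norm_num)).differentiableAt
      (isOpen_Ioo.mem_nhds hx)).hasDerivAt
  have hdu2 : ContDiffOn ℝ 2 (deriv u) (Ioo 0 b) :=
    hu3.deriv_of_isOpen isOpen_Ioo (by norm_num)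
  have hdv1 : ContDiffOn ℝ 1 (deriv v) (Ioo 0 b) :=
    hv2.deriv_of_isOpen isOpen_Ioo (by norm_num)
  have hud2 : ∀ x ∈ Ioo (0:ℝ) b, HasDerivAt (deriv u) (deriv (deriv u) x) x := by
    intro x hx
    exact ((hdu2.differentiableOn (by norm_num)).differentiableAt
      (isOpen_Ioo.mem_nhds hx)).hasDerivAt
  have hvd2 : ∀ x ∈ Ioo (0:ℝ) b, HasDerivAt (deriv v) (deriv (deriv v) x) x := by
    intro x hx
    exact ((hdv1.differentiableOn (by norm_num)).differentiableAt
      (isOpen_Ioo.mem_nhds hx)).hasDerivAt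
  -- derivative of T
  have hTmem : ∀ s ∈ Ioo (0:ℝ) b, T s ∈ Ioo (0:ℝ) b := by
    intro s hs
    exact ⟨(hT s hs).1.1, lt_of_le_of_lt (hT s hs).1.2 hs.2⟩
  have hTs : ∀ s ∈ Ioo (0:ℝ) b, HasDerivAt T ((deriv u (T s))⁻¹ * deriv v s) s := by
    intro s hs
    obtain ⟨⟨hT1, hT2⟩, hT3⟩ := hT s hs
    have hTm : T s ∈ Ioo (0:ℝ) b := hTmem s hs
    have hvs : v s ∈ Ioo (0:ℝ) (u b) := hT3 ▸ hmemIoo (T s) hTm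
    have hu'T : deriv u (T s) ≠ 0 := ne_of_gt (hu' _ hTm)
    have hUy : U (v s) = T s := by rw [← hT3]; exact hUleft _ (Ioo_subset_Icc_self hTm)
    have hUderiv : HasDerivAt U (deriv u (T s))⁻¹ (v s) := by
      refine HasDerivAt.of_local_left_inverse (f := u) (hUcont _ hvs) ?_ hu'T ?_
      · rw [hUy]; exact hud (T s) hTm
      · exact Filter.eventually_of_mem (Ioo_mem_nhds hvs.1 hvs.2) fun y hy => (hUeq y hy).2
    have hcomp : HasDerivAt (U ∘ v) ((deriv u (T s))⁻¹ * deriv v s) s :=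
      HasDerivAt.comp s hUderiv (hvd s hs)
    refine hcomp.congr_of_eventuallyEq ?_
    refine Filter.eventually_of_mem (isOpen_Ioo.mem_nhds hs) fun σ hσ => ?_
    obtain ⟨⟨k1, k2⟩, k3⟩ := hT σ hσ
    show T σ = U (v σ)
    rw [← k3, hUleft _ (Ioo_subset_Icc_self (hTmem σ hσ))]
  -- the comparison function h
  set h : ℝ → ℝ := fun σ => (deriv v σ) ^ 2 - (deriv u (T σ)) ^ 2 with hhdef
  have hhd : ∀ s ∈ Ioo (0:ℝ) b,
      HasDerivAt h (2 * deriv v s * (deriv (deriv v) s - deriv (deriv u) (T s))) s := by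
    intro s hs
    have hTm : T s ∈ Ioo (0:ℝ) b := hTmem s hs
    have hu'T : deriv u (T s) ≠ 0 := ne_of_gt (hu' _ hTm)
    have h1 : HasDerivAt (fun σ => deriv v σ ^ 2)
        (2 * deriv v s ^ 1 * deriv (deriv v) s) s := (hvd2 s hs).pow 2
    have h4 : HasDerivAt (fun σ => deriv u (T σ))
        (deriv (deriv u) (T s) * ((deriv u (T s))⁻¹ * deriv v s)) s :=
      HasDerivAt.comp s (hud2 (T s) hTm) (hTs s hs)
    have h5 : HasDerivAt (fun σ => (deriv u (T σ)) ^ 2)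
        (2 * deriv u (T s) ^ 1 * (deriv (deriv u) (T s) * ((deriv u (T s))⁻¹ * deriv v s))) s :=
      h4.pow 2
    have h6 := h1.sub h5
    exact h6.congr_deriv (by
      linear_combination (-(2 * deriv (deriv u) (T s) * deriv v s)) * mul_inv_cancel₀ hu'T)
  have hmonoh : MonotoneOn h (Ioo 0 b) := by
    refine monotoneOn_of_deriv_nonneg (convex_Ioo 0 b)
      (fun x hx => (hhd x hx).continuousAt.continuousWithinAt) ?_ ?_
    · rw [interior_Ioo]
      exact fun x hx => (hhd x hx).differentiableAt.differentiableWithinAt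
    · rw [interior_Ioo]
      intro x hx
      rw [(hhd x hx).deriv]
      have hTm : T x ∈ Ioo (0:ℝ) b := hTmem x hx
      have key := hmain (T x) x (hT x hx).1.1 (hT x hx).1.2 hx.2 (hT x hx).2
      have := hv' x hx
      nlinarith
  -- continuity of the derivative of u up to 0
  have hgc : ContinuousOn (derivWithin u (Icc 0 b)) (Icc 0 b) :=
    hu1.continuousOn_derivWithin (uniqueDiffOn_Icc hb) le_rfl
  -- conclusion
  intro s hs
  have key : 0 ≤ h s := by
    have hsub : ∀ σ ∈ Ioo (0:ℝ) s, h σ ≤ h s := fun σ hσ =>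
      hmonoh ⟨hσ.1, hσ.2.trans hs.2⟩ hs hσ.2.le
    have hlow : ∀ σ ∈ Ioo (0:ℝ) s, -(derivWithin u (Icc 0 b) (T σ)) ^ 2 ≤ h s := by
      intro σ hσ
      have hσ' : σ ∈ Ioo (0:ℝ) b := ⟨hσ.1, hσ.2.trans hs.2⟩
      have hTm : T σ ∈ Ioo (0:ℝ) b := hTmem σ hσ'
      have heq : derivWithin u (Icc 0 b) (T σ) = deriv u (T σ) :=
        derivWithin_of_mem_nhds (Icc_mem_nhds hTm.1 hTm.2)
      rw [heq]
      refine le_trans ?_ (hsub σ hσ)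
      have := sq_nonneg (deriv v σ)
      simp only [hhdef]
      nlinarith
    -- limit of the lower bound as σ → 0⁺
    have hTt0 : Filter.Tendsto T (nhdsWithin 0 (Ioo (0:ℝ) s)) (nhds 0) := by
      have hup : ∀ᶠ σ in nhdsWithin 0 (Ioo (0:ℝ) s), T σ ≤ σ := by
        filter_upwards [self_mem_nhdsWithin] with σ hσ
        exact (hT σ ⟨hσ.1, hσ.2.trans hs.2⟩).1.2
      have hlo : ∀ᶠ σ in nhdsWithin 0 (Ioo (0:ℝ) s), (0:ℝ) ≤ T σ := by
        filter_upwards [self_mem_nhdsWithin] with σ hσ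
        exact (hT σ ⟨hσ.1, hσ.2.trans hs.2⟩).1.1.le
      exact tendsto_of_tendsto_of_tendsto_of_le_of_le' tendsto_const_nhds
        (Filter.tendsto_id.mono_left nhdsWithin_le_nhds) hlo hup
    have hTt : Filter.Tendsto T (nhdsWithin 0 (Ioo (0:ℝ) s)) (nhdsWithin 0 (Icc 0 b)) := by
      rw [tendsto_nhdsWithin_iff]
      refine ⟨hTt0, ?_⟩
      filter_upwards [self_mem_nhdsWithin] with σ hσ
      exact Ioo_subset_Icc_self (hTmem σ ⟨hσ.1, hσ.2.trans hs.2⟩)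
    have hcont0 : Filter.Tendsto (fun σ => derivWithin u (Icc 0 b) (T σ))
        (nhdsWithin 0 (Ioo (0:ℝ) s)) (nhds 0) := by
      have h0m : (0:ℝ) ∈ Icc (0:ℝ) b := ⟨le_rfl, hb.le⟩
      have := (hgc 0 h0m).tendsto.comp hTt
      rwa [hu'0] at this
    have htend : Filter.Tendsto (fun σ => -(derivWithin u (Icc 0 b) (T σ)) ^ 2)
        (nhdsWithin 0 (Ioo (0:ℝ) s)) (nhds 0) := by
      have := ((hcont0.pow 2).neg)
      simpa using this
    have hne : (nhdsWithin (0:ℝ) (Ioo (0:ℝ) s)).NeBot := by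
      rw [nhdsWithin_Ioo_eq_nhdsGT hs.1]
      infer_instance
    exact le_of_tendsto htend
      (Filter.eventually_of_mem self_mem_nhdsWithin fun σ hσ => hlow σ hσ)
  simpa [hhdef, sub_nonneg] using key
end
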